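/- arXiv:1402.3905 — 2 statements merged into one kernel-verified Lean document; each statement's English description precedes it below -/
import Mathlib

section
/- For g ≥ 3, consider the homomorphism of abelian groups ∂ : (⊕_{i=1}^{g−1} M(g)) ⊕ M(g) ⊕ M(g) → M(g) defined by ∂((m_1,…,m_{g−1}), m_s, m_ρ) = Σ_{i=1}^{g−1}(T_i^{−1}(m_i) − m_i) + (S(m_s) − m_s) + (R(m_ρ) − m_ρ) (note S = S^{−1}). Writing t_{i,j} for the tuple whose i-th t-component is γ_j, s_j for the tuple whose s-component is γ_j, and ρ_j for the tuple whose ρ-component is γ_j (all other components zero), the kernel of ∂ is generated, as an abelian group, by: (F1) t_{i,j} for j ∉ {i, i+1}; (F2) t_{j,j} + t_{j,j+1} for j = 1,…,g−1; (F3) 2t_{j,j} + ρ_j + ρ_{j+1} for j = 1,…,g−1; (F4) 2t_{1,1} + 2t_{3,3} + ⋯ + 2t_{g−2,g−2} − ρ_g if g is odd, and 2t_{1,1} + 2t_{3,3} + ⋯ + 2t_{g−1,g−1} if g is even; (F5) s_j + s_{j−1} for j even; (F6) s_j − ρ_1 − ρ_2 − ⋯ − ρ_j for j odd. -/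
/-- `M(g) = ℤ^g / ⟨2(e₁ + ⋯ + e_g)⟩`, i.e. `H_1(N_g; ℤ)`. -/
def MN (g : ℕ) : Type :=
  (Fin g → ℤ) ⧸ AddSubgroup.zmultiples (fun _ => (2 : ℤ) : Fin g → ℤ)

instance (g : ℕ) : AddCommGroup (MN g) := by unfold MN; infer_instance

/-- `γ_i`, the class of `e_i` in `M(g)` (`i` is a 0-based index). -/
def γ {g : ℕ} (i : Fin g) : MN g :=
  QuotientAddGroup.mk (Pi.single i 1)

/-- The inclusion `Fin (g-1) → Fin g`. -/
def idx {g : ℕ} (i : Fin (g-1)) : Fin g := ⟨i, by have := i.isLt; omega⟩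

/-- The successor map `Fin (g-1) → Fin g`, `i ↦ i+1`. -/
def idx1 {g : ℕ} (i : Fin (g-1)) : Fin g := ⟨(i : ℕ) + 1, by have := i.isLt; omega⟩

/-- The formulas defining the automorphisms `T_i` on the generators `γ_j` of `M(g)`. -/
def IsT {g : ℕ} (T : Fin (g-1) → AddAut (MN g)) : Prop :=
  ∀ i : Fin (g-1),
    T i (γ (idx i)) = - γ (idx1 i) ∧
    T i (γ (idx1 i)) = γ (idx i) + (2 : ℤ) • γ (idx1 i) ∧
    ∀ j : Fin g, j ≠ idx i → j ≠ idx1 i → T i (γ j) = γ j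

/-- The formula defining the automorphism `S` on the generators `γ_j` of `M(g)`
(with 1-based index `j`, `S(γ_j) = (-1)^j (2γ_1 + ⋯ + 2γ_{j-1} + γ_j)`). -/
def IsS {g : ℕ} (S : AddAut (MN g)) : Prop :=
  ∀ j : Fin g,
    S (γ j) = (-1 : ℤ) ^ ((j : ℕ) + 1) • ((2 : ℤ) • (∑ k ∈ Finset.Iio j, γ k) + γ j)

/-- `t_{i,j} = [t_i] ⊗ γ_j` in `(⊕_{i=1}^{g-1} M(g)) ⊕ M(g) ⊕ M(g)` (the last two
summands are the `s`- and the `ρ`-component respectively). -/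
def tt {g : ℕ} (i : Fin (g-1)) (j : Fin g) : (Fin (g-1) → MN g) × MN g × MN g :=
  (Pi.single i (γ j), 0, 0)

/-- `s_j = [s] ⊗ γ_j`. -/
def ss {g : ℕ} (j : Fin g) : (Fin (g-1) → MN g) × MN g × MN g :=
  (0, γ j, 0)

/-- `ρ_j = [ρ] ⊗ γ_j`. -/
def rr {g : ℕ} (j : Fin g) : (Fin (g-1) → MN g) × MN g × MN g :=
  (0, 0, γ j)

/-- The generators (F1)-(F6) of the kernel (all indices in the names are 1-based, so e.g.
`t_{j,j}` is `tt j (idx j)`). -/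
def kerGens (g : ℕ) (hg : 3 ≤ g) : Set ((Fin (g-1) → MN g) × MN g × MN g) :=
  -- (F1)  t_{i,j} for j ∉ {i, i+1}
  {x | ∃ (i : Fin (g-1)) (j : Fin g), (j : ℕ) ≠ i ∧ (j : ℕ) ≠ (i : ℕ) + 1 ∧ x = tt i j} ∪
  -- (F2)  t_{j,j} + t_{j,j+1}
  {x | ∃ j : Fin (g-1), x = tt j (idx j) + tt j (idx1 j)} ∪
  -- (F3)  2t_{j,j} + ρ_j + ρ_{j+1}
  {x | ∃ j : Fin (g-1), x = (2 : ℤ) • tt j (idx j) + rr (idx j) + rr (idx1 j)} ∪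
  -- (F4)  2t_{1,1} + 2t_{3,3} + ⋯ (+ possibly −ρ_g)
  {(∑ j : Fin (g-1), if Even (j : ℕ) then (2 : ℤ) • tt j (idx j) else 0) +
      (if Odd g then -(rr (⟨g-1, by omega⟩ : Fin g)) else 0)} ∪
  -- (F5)  s_j + s_{j-1} for j even (1-based)
  {x | ∃ j k : Fin g, (k : ℕ) + 1 = j ∧ Even ((j : ℕ) + 1) ∧ x = ss j + ss k} ∪
  -- (F6)  s_j − ρ_1 − ⋯ − ρ_j for j odd (1-based)
  {x | ∃ j : Fin g, Odd ((j : ℕ) + 1) ∧ x = ss j - ∑ k ∈ Finset.Iic j, rr k}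
section AuxStmt11

variable {g : ℕ}

/-- The quotient map onto `MN g`, as an `AddMonoidHom`. -/
def MNmk (g : ℕ) : (Fin g → ℤ) →+ MN g := QuotientAddGroup.mk' _

lemma MNmk_surjective : Function.Surjective (MNmk g) :=
  QuotientAddGroup.mk'_surjective _

lemma γ_def (j : Fin g) : γ j = MNmk g (Pi.single j 1) := rfl

lemma sum_smul_γ (c : Fin g → ℤ) : ∑ j, c j • γ j = MNmk g c := by
  calc ∑ j, c j • γ j = ∑ j, MNmk g (c j • Pi.single j 1) := by
        refine Finset.sum_congr rfl fun j _ => ?_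
        rw [γ_def, ← map_zsmul]
    _ = MNmk g (∑ j, c j • Pi.single j 1) := (map_sum _ _ _).symm
    _ = MNmk g c := by
        congr 1
        ext k
        simp [Pi.single_apply]

lemma MNmk_eq_zero_iff (c : Fin g → ℤ) :
    MNmk g c = 0 ↔ ∃ k : ℤ, ∀ j, c j = 2 * k := by
  have h0 : MNmk g c = 0 ↔ c ∈ AddSubgroup.zmultiples (fun _ => (2:ℤ) : Fin g → ℤ) :=
    QuotientAddGroup.eq_zero_iff c
  rw [h0, AddSubgroup.mem_zmultiples_iff]
  constructor
  · rintro ⟨k, hk⟩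
    exact ⟨k, fun j => by rw [← congrFun hk j]; simp [mul_comm]⟩
  · rintro ⟨k, hk⟩
    exact ⟨k, by ext j; simp [hk j, mul_comm]⟩

lemma sum_smul_γ_eq_zero_iff (c : Fin g → ℤ) :
    ∑ j, c j • γ j = 0 ↔ ∃ k : ℤ, ∀ j, c j = 2 * k := by
  rw [sum_smul_γ, MNmk_eq_zero_iff]

lemma two_smul_sum_γ : ∑ j : Fin g, (2:ℤ) • γ j = 0 := by
  rw [show (∑ j : Fin g, (2:ℤ) • γ j) = ∑ j : Fin g, (fun _ : Fin g => (2:ℤ)) j • γ j from rfl,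
    sum_smul_γ_eq_zero_iff]
  exact ⟨1, fun j => rfl⟩

/-- Injection of `MN g` into the `i`-th `t`-component. -/
def ιt (g : ℕ) (i : Fin (g-1)) : MN g →+ (Fin (g-1) → MN g) × MN g × MN g where
  toFun x := (Pi.single i x, 0, 0)
  map_zero' := by simp
  map_add' a b := by
    simp only [Pi.single_add, Prod.mk_add_mk, add_zero]

/-- Injection of `MN g` into the `s`-component. -/
def ιs (g : ℕ) : MN g →+ (Fin (g-1) → MN g) × MN g × MN g where
  toFun x := (0, x, 0)
  map_zero' := rfl
  map_add' a b := by simp only [Prod.mk_add_mk, add_zero]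

/-- Injection of `MN g` into the `ρ`-component. -/
def ιr (g : ℕ) : MN g →+ (Fin (g-1) → MN g) × MN g × MN g where
  toFun x := (0, 0, x)
  map_zero' := rfl
  map_add' a b := by simp only [Prod.mk_add_mk, add_zero]

lemma tt_def (i : Fin (g-1)) (j : Fin g) : tt i j = ιt g i (γ j) := rfl
lemma ss_def (j : Fin g) : ss j = ιs g (γ j) := rfl
lemma rr_def (j : Fin g) : rr j = ιr g (γ j) := rfl

lemma hom_γ_span {A : Type*} [AddCommGroup A] (φ : MN g →+ A) (x : MN g) :
    ∃ f : Fin g → ℤ, φ x = ∑ j, f j • φ (γ j) := by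
  obtain ⟨c, rfl⟩ := MNmk_surjective (g := g) x
  refine ⟨c, ?_⟩
  rw [← sum_smul_γ, map_sum]
  exact Finset.sum_congr rfl fun j _ => map_zsmul φ _ _

lemma decomp (m : (Fin (g-1) → MN g) × MN g × MN g) :
    m = (∑ i, ιt g i (m.1 i)) + ιs g m.2.1 + ιr g m.2.2 := by
  refine Prod.ext ?_ (Prod.ext ?_ ?_)
  · simp only [Prod.fst_add, Prod.fst_sum, ιt, ιs, ιr, AddMonoidHom.coe_mk,
      ZeroHom.coe_mk, Finset.univ_sum_single, add_zero]
  · simp only [Prod.snd_add, Prod.snd_sum, Prod.fst_add, Prod.fst_sum, ιt, ιs, ιr,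
      AddMonoidHom.coe_mk, ZeroHom.coe_mk]
    simp
  · simp only [Prod.snd_add, Prod.snd_sum, ιt, ιs, ιr, AddMonoidHom.coe_mk,
      ZeroHom.coe_mk]
    simp

lemma mem_of_gens (p : Submodule ℤ ((Fin (g-1) → MN g) × MN g × MN g))
    (ht : ∀ i j, tt i j ∈ p) (hs : ∀ j, ss j ∈ p) (hr : ∀ j, rr j ∈ p)
    (m : (Fin (g-1) → MN g) × MN g × MN g) : m ∈ p := by
  rw [decomp m]
  refine add_mem (add_mem (Submodule.sum_mem _ fun i _ => ?_) ?_) ?_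
  · obtain ⟨f, hf⟩ := hom_γ_span (ιt g i) (m.1 i)
    rw [hf]
    exact Submodule.sum_mem _ fun j _ => Submodule.smul_mem _ _ (ht i j)
  · obtain ⟨f, hf⟩ := hom_γ_span (ιs g) m.2.1
    rw [hf]
    exact Submodule.sum_mem _ fun j _ => Submodule.smul_mem _ _ (hs j)
  · obtain ⟨f, hf⟩ := hom_γ_span (ιr g) m.2.2
    rw [hf]
    exact Submodule.sum_mem _ fun j _ => Submodule.smul_mem _ _ (hr j)

/-- Total version of `γ` indexed by `ℕ`. -/
def γF (g : ℕ) : ℕ → MN g := fun n => if h : n < g then γ ⟨n, h⟩ else 0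

/-- Total version of `rr` indexed by `ℕ`. -/
def rF (g : ℕ) : ℕ → (Fin (g-1) → MN g) × MN g × MN g :=
  fun n => if h : n < g then rr ⟨n, h⟩ else 0

lemma γF_lt (n : ℕ) (h : n < g) : γF g n = γ ⟨n, h⟩ := dif_pos h
lemma rF_lt (n : ℕ) (h : n < g) : rF g n = rr ⟨n, h⟩ := dif_pos h

lemma idx_lt (i : Fin (g-1)) : (i : ℕ) < g := lt_of_lt_of_le i.isLt (Nat.sub_le g 1)
lemma idx1_lt (i : Fin (g-1)) : (i : ℕ) + 1 < g := by have := i.isLt; omega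

lemma γF_idx (i : Fin (g-1)) : γF g i = γ (idx i) := dif_pos (idx_lt i)
lemma γF_idx1 (i : Fin (g-1)) : γF g ((i : ℕ) + 1) = γ (idx1 i) := dif_pos (idx1_lt i)
lemma rF_idx (i : Fin (g-1)) : rF g i = rr (idx i) := dif_pos (idx_lt i)
lemma rF_idx1 (i : Fin (g-1)) : rF g ((i : ℕ) + 1) = rr (idx1 i) := dif_pos (idx1_lt i)

section WithData

variable (T : Fin (g-1) → AddAut (MN g))
variable (S : AddAut (MN g)) (R : AddAut (MN g))
variable (D : ((Fin (g-1) → MN g) × MN g × MN g) →+ MN g)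

lemma Tinv_other (hT : IsT T) (i : Fin (g-1)) (j : Fin g) (h1 : j ≠ idx i) (h2 : j ≠ idx1 i) :
    (T i).symm (γ j) = γ j := by
  calc (T i).symm (γ j) = (T i).symm (T i (γ j)) := by rw [(hT i).2.2 j h1 h2]
    _ = γ j := by rw [AddEquiv.symm_apply_apply]

lemma Tinv_succ (hT : IsT T) (i : Fin (g-1)) : (T i).symm (γ (idx1 i)) = - γ (idx i) := by
  have h2 : (T i).symm (T i (γ (idx i))) = (T i).symm (- γ (idx1 i)) := by rw [(hT i).1]
  rw [AddEquiv.symm_apply_apply, map_neg] at h2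
  rw [h2, neg_neg]

lemma Tinv_self (hT : IsT T) (i : Fin (g-1)) :
    (T i).symm (γ (idx i)) = γ (idx1 i) + (2:ℤ) • γ (idx i) := by
  have h2 : (T i).symm (T i (γ (idx1 i))) = (T i).symm (γ (idx i) + (2:ℤ) • γ (idx1 i)) := by
    rw [(hT i).2.1]
  rw [AddEquiv.symm_apply_apply, map_add, map_zsmul, Tinv_succ T hT i] at h2
  rw [h2]
  abel

lemma D_tt (hD : ∀ m, D m = (∑ i : Fin (g-1), ((T i).symm (m.1 i) - m.1 i)) + (S m.2.1 - m.2.1) + (R m.2.2 - m.2.2)) (i : Fin (g-1)) (j : Fin g) : D (tt i j) = (T i).symm (γ j) - γ j := by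
  rw [hD]
  have h1 : ∀ i' : Fin (g-1), i' ∈ Finset.univ → i' ≠ i →
      ((T i').symm ((tt i j).1 i') - (tt i j).1 i') = 0 := by
    intro i' _ h
    simp [tt, Pi.single_eq_of_ne h]
  rw [Finset.sum_eq_single i (h1) (by simp)]
  simp [tt]

lemma D_ss (hD : ∀ m, D m = (∑ i : Fin (g-1), ((T i).symm (m.1 i) - m.1 i)) + (S m.2.1 - m.2.1) + (R m.2.2 - m.2.2)) (j : Fin g) : D (ss j) = S (γ j) - γ j := by
  rw [hD]
  simp [ss]

lemma D_rr (hR : ∀ x, R x = -x) (hD : ∀ m, D m = (∑ i : Fin (g-1), ((T i).symm (m.1 i) - m.1 i)) + (S m.2.1 - m.2.1) + (R m.2.2 - m.2.2)) (j : Fin g) : D (rr j) = -((2:ℤ) • γ j) := by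
  rw [hD]
  simp [rr, hR]
  abel


lemma Iio_eq_insert (j k : Fin g) (h : (k:ℕ) + 1 = j) :
    Finset.Iio j = insert k (Finset.Iio k) := by
  rw [Finset.Iio_insert]
  ext x
  simp only [Finset.mem_Iio, Finset.mem_Iic, Fin.lt_def, Fin.le_def]
  omega

lemma DK5 (hS : IsS S)
    (hD : ∀ m, D m = (∑ i : Fin (g-1), ((T i).symm (m.1 i) - m.1 i)) +
      (S m.2.1 - m.2.1) + (R m.2.2 - m.2.2))
    (j k : Fin g) (hkj : (k:ℕ) + 1 = j) (hje : Even ((j:ℕ) + 1)) :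
    D (ss j + ss k) = 0 := by
  have hodd : Odd ((k:ℕ) + 1) := by
    rw [Nat.odd_iff]; rw [Nat.even_iff] at hje; omega
  rw [map_add, D_ss T S R D hD, D_ss T S R D hD, hS j, hS k,
    Even.neg_one_pow hje, Odd.neg_one_pow hodd,
    Iio_eq_insert j k hkj, Finset.sum_insert (by simp)]
  simp only [one_smul, neg_one_smul]
  abel

lemma DK6 (hS : IsS S) (hR : ∀ x, R x = -x)
    (hD : ∀ m, D m = (∑ i : Fin (g-1), ((T i).symm (m.1 i) - m.1 i)) +
      (S m.2.1 - m.2.1) + (R m.2.2 - m.2.2))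
    (j : Fin g) (h : Odd ((j:ℕ) + 1)) :
    D (ss j - ∑ k ∈ Finset.Iic j, rr k) = 0 := by
  rw [map_sub, map_sum, D_ss T S R D hD, hS j, Odd.neg_one_pow h,
    Finset.sum_congr rfl (fun k _ => D_rr T S R D hR hD k),
    ← Finset.Iio_insert j, Finset.sum_insert (by simp)]
  simp only [neg_one_smul, Finset.sum_neg_distrib, ← Finset.smul_sum]
  abel

lemma DK2 (hT : IsT T)
    (hD : ∀ m, D m = (∑ i : Fin (g-1), ((T i).symm (m.1 i) - m.1 i)) +
      (S m.2.1 - m.2.1) + (R m.2.2 - m.2.2))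
    (i : Fin (g-1)) : D (tt i (idx i) + tt i (idx1 i)) = 0 := by
  rw [map_add, D_tt T S R D hD, D_tt T S R D hD, Tinv_self T hT i, Tinv_succ T hT i]
  abel

lemma DK3 (hT : IsT T) (hR : ∀ x, R x = -x)
    (hD : ∀ m, D m = (∑ i : Fin (g-1), ((T i).symm (m.1 i) - m.1 i)) +
      (S m.2.1 - m.2.1) + (R m.2.2 - m.2.2))
    (i : Fin (g-1)) : D ((2:ℤ) • tt i (idx i) + rr (idx i) + rr (idx1 i)) = 0 := by
  rw [map_add, map_add, map_zsmul, D_tt T S R D hD, Tinv_self T hT i,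
    D_rr T S R D hR hD, D_rr T S R D hR hD]
  abel

lemma DK1 (hT : IsT T)
    (hD : ∀ m, D m = (∑ i : Fin (g-1), ((T i).symm (m.1 i) - m.1 i)) +
      (S m.2.1 - m.2.1) + (R m.2.2 - m.2.2))
    (i : Fin (g-1)) (j : Fin g) (h1 : (j:ℕ) ≠ i) (h2 : (j:ℕ) ≠ (i:ℕ) + 1) :
    D (tt i j) = 0 := by
  rw [D_tt T S R D hD, Tinv_other T hT i j (fun h => h1 (by rw [h]; rfl))
    (fun h => h2 (by rw [h]; rfl)), sub_self]

lemma sum_even_pairs (n : ℕ) :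
    ∑ m ∈ Finset.range n, (if Even m then (2:ℤ) • (γF g m + γF g (m+1)) else 0)
      = ∑ m ∈ Finset.range (if Even n then n else n+1), (2:ℤ) • γF g m := by
  induction n with
  | zero => simp
  | succ n ih =>
    rw [Finset.sum_range_succ, ih]
    rcases Nat.even_or_odd n with he | ho
    · rw [if_pos he, if_pos he, if_neg (by simp [Nat.even_add_one, he]),
        Finset.sum_range_succ, Finset.sum_range_succ]
      rw [smul_add]
      abel
    · rw [if_neg (Nat.not_even_iff_odd.mpr ho), if_neg (Nat.not_even_iff_odd.mpr ho),
        if_pos (Nat.even_add_one.mpr (Nat.not_even_iff_odd.mpr ho))]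
      abel

lemma sum_range_γF : ∑ m ∈ Finset.range g, (2:ℤ) • γF g m = 0 := by
  rw [← Fin.sum_univ_eq_sum_range (fun n => (2:ℤ) • γF g n) g]
  rw [Finset.sum_congr rfl (fun i _ => by rw [γF_lt _ i.isLt])]
  exact two_smul_sum_γ

/-- The (F4) generator. -/
def E4 (g : ℕ) (hg : 3 ≤ g) : (Fin (g-1) → MN g) × MN g × MN g :=
  (∑ j : Fin (g-1), if Even (j : ℕ) then (2 : ℤ) • tt j (idx j) else 0) +
    (if Odd g then -(rr (⟨g-1, by omega⟩ : Fin g)) else 0)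

lemma DK4 (hT : IsT T) (hR : ∀ x, R x = -x)
    (hD : ∀ m, D m = (∑ i : Fin (g-1), ((T i).symm (m.1 i) - m.1 i)) +
      (S m.2.1 - m.2.1) + (R m.2.2 - m.2.2))
    (hg : 3 ≤ g) : D (E4 g hg) = 0 := by
  rw [E4, map_add, map_sum]
  have h1 : ∀ i : Fin (g-1), D (if Even (i:ℕ) then (2:ℤ) • tt i (idx i) else 0)
      = (fun n => if Even n then (2:ℤ) • (γF g n + γF g (n+1)) else 0) ((i:ℕ)) := by
    intro i
    simp only
    split_ifs with h
    · rw [map_zsmul, D_tt T S R D hD, Tinv_self T hT i, γF_idx, γF_idx1]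
      abel
    · exact map_zero D
  rw [Finset.sum_congr rfl (fun i _ => h1 i),
    Fin.sum_univ_eq_sum_range (fun n => if Even n then (2:ℤ) • (γF g n + γF g (n+1)) else 0)
      (g-1),
    sum_even_pairs]
  rcases Nat.even_or_odd g with he | ho
  · have h2 : ¬ Even (g-1) := by rw [Nat.even_iff] at *; omega
    rw [if_neg h2, if_neg (Nat.not_odd_iff_even.mpr he), map_zero,
      show g - 1 + 1 = g from by omega, sum_range_γF, add_zero]
  · have h2 : Even (g-1) := by rw [Nat.even_iff]; rw [Nat.odd_iff] at ho; omega
    rw [if_pos h2, if_pos ho, map_neg, D_rr T S R D hR hD, neg_neg]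
    have h3 : (2:ℤ) • γ (⟨g-1, by omega⟩ : Fin g) = (2:ℤ) • γF g (g-1) := by
      rw [γF_lt (g-1) (by omega)]
    rw [h3, ← Finset.sum_range_succ (fun m => (2:ℤ) • γF g m) (g-1),
      show g - 1 + 1 = g from by omega, sum_range_γF]

lemma gmem1 (hg : 3 ≤ g) (i : Fin (g-1)) (j : Fin g) (h1 : (j:ℕ) ≠ i)
    (h2 : (j:ℕ) ≠ (i:ℕ) + 1) : tt i j ∈ kerGens g hg :=
  Set.mem_union_left _ (Set.mem_union_left _ (Set.mem_union_left _
    (Set.mem_union_left _ (Set.mem_union_left _ ⟨i, j, h1, h2, rfl⟩))))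

lemma gmem2 (hg : 3 ≤ g) (i : Fin (g-1)) :
    tt i (idx i) + tt i (idx1 i) ∈ kerGens g hg :=
  Set.mem_union_left _ (Set.mem_union_left _ (Set.mem_union_left _
    (Set.mem_union_left _ (Set.mem_union_right _ ⟨i, rfl⟩))))

lemma gmem3 (hg : 3 ≤ g) (i : Fin (g-1)) :
    (2:ℤ) • tt i (idx i) + rr (idx i) + rr (idx1 i) ∈ kerGens g hg :=
  Set.mem_union_left _ (Set.mem_union_left _ (Set.mem_union_left _
    (Set.mem_union_right _ ⟨i, rfl⟩)))

lemma gmem4 (hg : 3 ≤ g) : E4 g hg ∈ kerGens g hg :=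
  Set.mem_union_left _ (Set.mem_union_left _ (Set.mem_union_right _ rfl))

lemma gmem5 (hg : 3 ≤ g) (j k : Fin g) (hkj : (k:ℕ) + 1 = j) (hje : Even ((j:ℕ) + 1)) :
    ss j + ss k ∈ kerGens g hg :=
  Set.mem_union_left _ (Set.mem_union_right _ ⟨j, k, hkj, hje, rfl⟩)

lemma gmem6 (hg : 3 ≤ g) (j : Fin g) (hodd : Odd ((j:ℕ) + 1)) :
    ss j - ∑ k ∈ Finset.Iic j, rr k ∈ kerGens g hg :=
  Set.mem_union_right _ ⟨j, hodd, rfl⟩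

lemma closure_le_ker (hg : 3 ≤ g) (hT : IsT T) (hS : IsS S) (hR : ∀ x, R x = -x)
    (hD : ∀ m, D m = (∑ i : Fin (g-1), ((T i).symm (m.1 i) - m.1 i)) +
      (S m.2.1 - m.2.1) + (R m.2.2 - m.2.2)) :
    AddSubgroup.closure (kerGens g hg) ≤ D.ker := by
  rw [AddSubgroup.closure_le]
  rintro x (((((⟨i, j, h1, h2, rfl⟩ | ⟨i, rfl⟩) | ⟨i, rfl⟩) | rfl) |
    ⟨j, k, hkj, hje, rfl⟩) | ⟨j, hodd, rfl⟩)
  · exact AddMonoidHom.mem_ker.mpr (DK1 T S R D hT hD i j h1 h2)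
  · exact AddMonoidHom.mem_ker.mpr (DK2 T S R D hT hD i)
  · exact AddMonoidHom.mem_ker.mpr (DK3 T S R D hT hR hD i)
  · exact AddMonoidHom.mem_ker.mpr (DK4 T S R D hT hR hD hg)
  · exact AddMonoidHom.mem_ker.mpr (DK5 T S R D hS hD j k hkj hje)
  · exact AddMonoidHom.mem_ker.mpr (DK6 T S R D hS hR hD j hodd)

lemma tt_mem_basis (hg : 3 ≤ g) (i : Fin (g-1)) (j : Fin g) :
    tt i j ∈ Submodule.span ℤ (kerGens g hg ∪
      Set.range (fun i' : Fin (g-1) => tt i' (idx i')) ∪ {rr (⟨0, by omega⟩ : Fin g)}) := by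
  set p := Submodule.span ℤ (kerGens g hg ∪
      Set.range (fun i' : Fin (g-1) => tt i' (idx i')) ∪ {rr (⟨0, by omega⟩ : Fin g)})
  have hti : tt i (idx i) ∈ p :=
    Submodule.subset_span (Set.mem_union_left _ (Set.mem_union_right _ ⟨i, rfl⟩))
  by_cases h1 : (j:ℕ) = (i:ℕ)
  · have : j = idx i := Fin.ext h1
    rw [this]; exact hti
  by_cases h2 : (j:ℕ) = (i:ℕ) + 1
  · have hj : j = idx1 i := Fin.ext h2
    have e : tt i j = (tt i (idx i) + tt i (idx1 i)) - tt i (idx i) := by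
      rw [hj]; abel
    rw [e]
    exact sub_mem (Submodule.subset_span
      (Set.mem_union_left _ (Set.mem_union_left _ (gmem2 hg i)))) hti
  · exact Submodule.subset_span (Set.mem_union_left _ (Set.mem_union_left _
      (gmem1 hg i j h1 h2)))

lemma rr_mem_basis (hg : 3 ≤ g) (j : Fin g) :
    rr j ∈ Submodule.span ℤ (kerGens g hg ∪
      Set.range (fun i' : Fin (g-1) => tt i' (idx i')) ∪ {rr (⟨0, by omega⟩ : Fin g)}) := by
  set p := Submodule.span ℤ (kerGens g hg ∪
      Set.range (fun i' : Fin (g-1) => tt i' (idx i')) ∪ {rr (⟨0, by omega⟩ : Fin g)}) with hp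
  suffices h : ∀ n (hn : n < g), rr (⟨n, hn⟩ : Fin g) ∈ p by
    have := h j.1 j.2
    simpa using this
  intro n
  induction n with
  | zero => intro hn; exact Submodule.subset_span (Set.mem_union_right _ rfl)
  | succ n ih =>
    intro hn
    have hn1 : n < g - 1 := by omega
    set i : Fin (g-1) := ⟨n, hn1⟩ with hi
    have e : rr (⟨n+1, hn⟩ : Fin g) =
        ((2:ℤ) • tt i (idx i) + rr (idx i) + rr (idx1 i)) - (2:ℤ) • tt i (idx i)
          - rr (idx i) := by
      show rr (idx1 i) = _
      abel
    rw [e]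
    refine sub_mem (sub_mem (Submodule.subset_span (Set.mem_union_left _
      (Set.mem_union_left _ (gmem3 hg i)))) ?_) ?_
    · exact Submodule.smul_mem _ _ (Submodule.subset_span
        (Set.mem_union_left _ (Set.mem_union_right _ ⟨i, rfl⟩)))
    · exact ih (by omega)

lemma ss_mem_basis (hg : 3 ≤ g) (j : Fin g) :
    ss j ∈ Submodule.span ℤ (kerGens g hg ∪
      Set.range (fun i' : Fin (g-1) => tt i' (idx i')) ∪ {rr (⟨0, by omega⟩ : Fin g)}) := by
  set p := Submodule.span ℤ (kerGens g hg ∪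
      Set.range (fun i' : Fin (g-1) => tt i' (idx i')) ∪ {rr (⟨0, by omega⟩ : Fin g)}) with hp
  have heven : ∀ j' : Fin g, Even (j':ℕ) → ss j' ∈ p := by
    intro j' hj'
    have hodd : Odd ((j':ℕ) + 1) := by
      rw [Nat.odd_iff]; rw [Nat.even_iff] at hj'; omega
    have e : ss j' = (ss j' - ∑ k ∈ Finset.Iic j', rr k) + ∑ k ∈ Finset.Iic j', rr k := by
      abel
    rw [e]
    exact add_mem (Submodule.subset_span (Set.mem_union_left _ (Set.mem_union_left _
      (gmem6 hg j' hodd)))) (Submodule.sum_mem _ fun k _ => rr_mem_basis hg k)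
  rcases Nat.even_or_odd (j:ℕ) with he | ho
  · exact heven j he
  · have hj1 : 1 ≤ (j:ℕ) := by rcases ho with ⟨c, hc⟩; omega
    set k : Fin g := ⟨(j:ℕ) - 1, by omega⟩ with hk
    have hkj : (k:ℕ) + 1 = (j:ℕ) := by simp [hk]; omega
    have hje : Even ((j:ℕ) + 1) := by
      rw [Nat.even_iff]; rw [Nat.odd_iff] at ho; omega
    have hke : Even (k:ℕ) := by
      show Even ((j:ℕ) - 1); rw [Nat.even_iff]; rw [Nat.odd_iff] at ho; omega
    have e : ss j = (ss j + ss k) - ss k := by abel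
    rw [e]
    exact sub_mem (Submodule.subset_span (Set.mem_union_left _ (Set.mem_union_left _
      (gmem5 hg j k hkj hje)))) (heven k hke)

lemma span_basis_top (hg : 3 ≤ g) :
    Submodule.span ℤ (kerGens g hg ∪
      Set.range (fun i' : Fin (g-1) => tt i' (idx i')) ∪ {rr (⟨0, by omega⟩ : Fin g)}) = ⊤ := by
  rw [eq_top_iff]
  rintro m -
  exact mem_of_gens _ (fun i j => tt_mem_basis hg i j) (fun j => ss_mem_basis hg j)
    (fun j => rr_mem_basis hg j) m

lemma reduce (hg : 3 ≤ g) (m : (Fin (g-1) → MN g) × MN g × MN g) :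
    ∃ (α : Fin (g-1) → ℤ) (β : ℤ),
      m - ((∑ i, α i • tt i (idx i)) + β • rr (⟨0, by omega⟩ : Fin g)) ∈
        Submodule.span ℤ (kerGens g hg) := by
  have hm : m ∈ Submodule.span ℤ (kerGens g hg ∪
      Set.range (fun i' : Fin (g-1) => tt i' (idx i')) ∪ {rr (⟨0, by omega⟩ : Fin g)}) := by
    rw [span_basis_top hg]; trivial
  rw [Submodule.span_union, Submodule.span_union, Submodule.mem_sup] at hm
  obtain ⟨y, hy, z, hz, hyz⟩ := hm
  rw [Submodule.mem_sup] at hy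
  obtain ⟨a, ha, b, hb, hab⟩ := hy
  obtain ⟨α, hα⟩ := (Submodule.mem_span_range_iff_exists_fun (R := ℤ)).mp hb
  obtain ⟨β, hβ⟩ := Submodule.mem_span_singleton.mp hz
  refine ⟨α, β, ?_⟩
  have e : m - ((∑ i, α i • tt i (idx i)) + β • rr (⟨0, by omega⟩ : Fin g)) = a := by
    rw [hα, hβ, ← hyz, ← hab]; abel
  rw [e]
  exact ha

/-- Total version of `α` coefficients. -/
def αF (g : ℕ) (α : Fin (g-1) → ℤ) : ℕ → ℤ :=
  fun n => if h : n < g-1 then α ⟨n, h⟩ else 0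

/-- The coefficient of `γ_n` in `∂` of the normal form. -/
def Cfun (g : ℕ) (α : Fin (g-1) → ℤ) (β : ℤ) : ℕ → ℤ :=
  fun n => αF g α n + (if n = 0 then -(2*β) else αF g α (n-1))

lemma αF_idx (α : Fin (g-1) → ℤ) (i : Fin (g-1)) : αF g α i = α i := by
  rw [αF, dif_pos i.isLt, Fin.eta]

lemma D_nf (hg : 3 ≤ g) (hT : IsT T)
    (hD : ∀ m, D m = (∑ i : Fin (g-1), ((T i).symm (m.1 i) - m.1 i)) +
      (S m.2.1 - m.2.1) + (R m.2.2 - m.2.2))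
    (hR : ∀ x, R x = -x) (α : Fin (g-1) → ℤ) (β : ℤ) :
    D ((∑ i, α i • tt i (idx i)) + β • rr (⟨0, by omega⟩ : Fin g)) =
      ∑ j : Fin g, (fun j' : Fin g => Cfun g α β (j' : ℕ)) j • γ j := by
  have hterm : ∀ i : Fin (g-1), D (α i • tt i (idx i)) =
      α i • γ (idx i) + α i • γ (idx1 i) := by
    intro i
    rw [map_zsmul, D_tt T S R D hD, Tinv_self T hT i,
      show γ (idx1 i) + (2:ℤ) • γ (idx i) - γ (idx i) = γ (idx i) + γ (idx1 i) from by abel,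
      smul_add]
  rw [map_add, map_sum, map_zsmul, D_rr T S R D hR hD,
    Finset.sum_congr rfl (fun i _ => hterm i)]
  have h4 : ∑ i : Fin (g-1), (α i • γ (idx i) + α i • γ (idx1 i)) =
      ∑ n ∈ Finset.range (g-1), (αF g α n • γF g n + αF g α n • γF g (n+1)) := by
    rw [← Fin.sum_univ_eq_sum_range
      (fun n => αF g α n • γF g n + αF g α n • γF g (n+1)) (g-1)]
    exact Finset.sum_congr rfl fun i _ => by rw [αF_idx, γF_idx, γF_idx1]
  have h6 : ∑ n ∈ Finset.range (g-1), αF g α n • γF g n =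
      ∑ n ∈ Finset.range g, αF g α n • γF g n := by
    have e : ∑ n ∈ Finset.range g, αF g α n • γF g n =
        ∑ n ∈ Finset.range (g-1), αF g α n • γF g n + αF g α (g-1) • γF g (g-1) := by
      rw [← Finset.sum_range_succ (fun n => αF g α n • γF g n) (g-1),
        Nat.sub_add_cancel (by omega : 1 ≤ g)]
    rw [e, show αF g α (g-1) = 0 from dif_neg (by omega), zero_smul, add_zero]
  have h7 : ∑ n ∈ Finset.range (g-1), αF g α n • γF g (n+1) =
      ∑ n ∈ Finset.range g, (if n = 0 then (0:ℤ) else αF g α (n-1)) • γF g n := by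
    have e := Finset.sum_range_succ'
      (fun n => (if n = 0 then (0:ℤ) else αF g α (n-1)) • γF g n) (g-1)
    rw [show g - 1 + 1 = g from by omega] at e
    rw [e]
    simp only [Nat.succ_ne_zero, if_neg, Nat.add_sub_cancel, if_pos, zero_smul, add_zero]
    exact Finset.sum_congr rfl fun n _ => by simp
  have h8 : β • (-((2:ℤ) • γ (⟨0, by omega⟩ : Fin g))) =
      ∑ n ∈ Finset.range g, (if n = 0 then -(2*β) else (0:ℤ)) • γF g n := by
    rw [Finset.sum_eq_single_of_mem 0 (Finset.mem_range.mpr (by omega))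
      (fun n _ hn => by rw [if_neg hn, zero_smul])]
    rw [if_pos rfl, γF_lt 0 (by omega), smul_neg, smul_smul, ← neg_smul]
    congr 1
    ring
  rw [h4, Finset.sum_add_distrib, h6, h7, h8, ← Finset.sum_add_distrib,
    ← Finset.sum_add_distrib]
  have h9 : ∀ n ∈ Finset.range g,
      (αF g α n • γF g n + (if n = 0 then (0:ℤ) else αF g α (n-1)) • γF g n +
        (if n = 0 then -(2*β) else (0:ℤ)) • γF g n) = Cfun g α β n • γF g n := by
    intro n _
    rw [← add_smul, ← add_smul]
    congr 1
    rw [Cfun]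
    split_ifs <;> ring
  rw [Finset.sum_congr rfl h9, ← Fin.sum_univ_eq_sum_range (fun n => Cfun g α β n • γF g n) g]
  exact Finset.sum_congr rfl fun j _ => by rw [γF_lt _ j.isLt, Fin.eta]

lemma alpha_struct (α : Fin (g-1) → ℤ) (β : ℤ) (k : ℤ)
    (hC : ∀ n, n < g → Cfun g α β n = 2*k) :
    ∀ n, n < g - 1 → αF g α n = if Even n then αF g α 0 else 2*k - αF g α 0 := by
  intro n
  induction n with
  | zero => intro _; rw [if_pos (Even.zero)]
  | succ n ih =>
    intro h
    have hC' := hC (n+1) (by omega)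
    have e : Cfun g α β (n+1) = αF g α (n+1) + αF g α n := by
      rw [Cfun]
      simp
    rw [e] at hC'
    have e2 : αF g α (n+1) = 2*k - αF g α n := by omega
    rw [e2, ih (by omega)]
    by_cases he : Even n
    · rw [if_pos he, if_neg (by simp [Nat.even_add_one, he])]
    · rw [if_neg he, if_pos (Nat.even_add_one.mpr he)]
      ring

lemma telescope_rr (hg : 3 ≤ g) (ho : Odd g) :
    ∑ i : Fin (g-1), ((-1:ℤ)^((i:ℕ)+1)) • (rr (idx i) + rr (idx1 i))
      = rr (⟨g-1, by omega⟩ : Fin g) - rr (⟨0, by omega⟩ : Fin g) := by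
  have hterm : ∀ i : Fin (g-1),
      ((-1:ℤ)^((i:ℕ)+1)) • (rr (idx i) + rr (idx1 i)) =
      (fun n => ((-1:ℤ)^(n+1)) • rF g (n+1) - ((-1:ℤ)^n) • rF g n) (i:ℕ) := by
    intro i
    simp only
    rw [rF_idx, rF_idx1, smul_add, pow_succ, mul_neg_one]
    simp only [neg_smul]
    abel
  rw [Finset.sum_congr rfl (fun i _ => hterm i),
    Fin.sum_univ_eq_sum_range (fun n => ((-1:ℤ)^(n+1)) • rF g (n+1) - ((-1:ℤ)^n) • rF g n)
      (g-1),
    Finset.sum_range_sub (fun n => ((-1:ℤ)^n) • rF g n) (g-1)]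
  have he : Even (g-1) := by rw [Nat.even_iff]; rw [Nat.odd_iff] at ho; omega
  rw [Even.neg_one_pow he, pow_zero, one_smul, one_smul, rF_lt (g-1) (by omega),
    rF_lt 0 (by omega)]

lemma X_mem (hg : 3 ≤ g) (ho : Odd g) :
    (∑ i : Fin (g-1), if Even (i:ℕ) then 0 else (2:ℤ) • tt i (idx i)) -
      rr (⟨0, by omega⟩ : Fin g) ∈ Submodule.span ℤ (kerGens g hg) := by
  have e : (∑ i : Fin (g-1), if Even (i:ℕ) then 0 else (2:ℤ) • tt i (idx i)) -
      rr (⟨0, by omega⟩ : Fin g) = E4 g hg +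
      ∑ i : Fin (g-1), ((-1:ℤ)^((i:ℕ)+1)) •
        ((2:ℤ) • tt i (idx i) + rr (idx i) + rr (idx1 i)) := by
    have hsplit : ∀ i : Fin (g-1),
        ((-1:ℤ)^((i:ℕ)+1)) • ((2:ℤ) • tt i (idx i) + rr (idx i) + rr (idx1 i)) =
        ((-1:ℤ)^((i:ℕ)+1)) • ((2:ℤ) • tt i (idx i)) +
        ((-1:ℤ)^((i:ℕ)+1)) • (rr (idx i) + rr (idx1 i)) := by
      intro i
      rw [add_assoc, smul_add]
    rw [Finset.sum_congr rfl (fun i _ => hsplit i), Finset.sum_add_distrib,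
      telescope_rr hg ho, E4, if_pos ho]
    have hcomb : ∀ i : Fin (g-1),
        (if Even (i:ℕ) then (2:ℤ) • tt i (idx i) else 0) +
          ((-1:ℤ)^((i:ℕ)+1)) • ((2:ℤ) • tt i (idx i)) =
        (if Even (i:ℕ) then 0 else (2:ℤ) • tt i (idx i)) := by
      intro i
      by_cases he : Even (i:ℕ)
      · rw [if_pos he, if_pos he, Odd.neg_one_pow (by simp [Nat.even_add_one, he]    ),
          neg_one_smul]
        abel
      · rw [if_neg he, if_neg he, Even.neg_one_pow (Nat.even_add_one.mpr he), one_smul,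
          zero_add]
    calc (∑ i : Fin (g-1), if Even (i:ℕ) then 0 else (2:ℤ) • tt i (idx i)) -
        rr (⟨0, by omega⟩ : Fin g)
        = (∑ i : Fin (g-1), ((if Even (i:ℕ) then (2:ℤ) • tt i (idx i) else 0) +
            ((-1:ℤ)^((i:ℕ)+1)) • ((2:ℤ) • tt i (idx i)))) -
            rr (⟨0, by omega⟩ : Fin g) := by
          rw [Finset.sum_congr rfl (fun i _ => hcomb i)]
      _ = _ := by
          rw [Finset.sum_add_distrib]
          abel
  rw [e]
  exact add_mem (Submodule.subset_span (gmem4 hg))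
    (Submodule.sum_mem _ fun i _ => Submodule.smul_mem _ _
      (Submodule.subset_span (gmem3 hg i)))

lemma nf_mem (hg : 3 ≤ g) (hT : IsT T) (hR : ∀ x, R x = -x)
    (hD : ∀ m, D m = (∑ i : Fin (g-1), ((T i).symm (m.1 i) - m.1 i)) +
      (S m.2.1 - m.2.1) + (R m.2.2 - m.2.2))
    (α : Fin (g-1) → ℤ) (β : ℤ)
    (h0 : D ((∑ i, α i • tt i (idx i)) + β • rr (⟨0, by omega⟩ : Fin g)) = 0) :
    (∑ i, α i • tt i (idx i)) + β • rr (⟨0, by omega⟩ : Fin g) ∈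
      Submodule.span ℤ (kerGens g hg) := by
  rw [D_nf T S R D hg hT hD hR α β] at h0
  obtain ⟨k, hk⟩ := (sum_smul_γ_eq_zero_iff (fun j' : Fin g => Cfun g α β (j' : ℕ))).mp h0
  have hC : ∀ n, n < g → Cfun g α β n = 2*k := fun n hn => hk ⟨n, hn⟩
  have hα := alpha_struct α β k hC
  have eg1 : αF g α (g-1) = 0 := dif_neg (by omega)
  have eg2 : αF g α (g-2) = 2*k := by
    have h1 := hC (g-1) (by omega)
    rw [Cfun, if_neg (by omega : ¬ (g-1 = 0)), eg1, show g-1-1 = g-2 from by omega] at h1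
    omega
  have e0 : αF g α 0 + -(2*β) = 2*k := by
    have h1 := hC 0 (by omega)
    rw [Cfun, if_pos rfl] at h1
    omega
  rcases Nat.even_or_odd g with hge | hgo
  · -- g even
    have hg2 : Even (g-2) := by rw [Nat.even_iff] at *; omega
    have hα0 : αF g α 0 = 2*k := by
      have := hα (g-2) (by omega)
      rw [if_pos hg2] at this
      omega
    have hβ : β = 0 := by omega
    have hαi : ∀ i : Fin (g-1), α i = if Even (i:ℕ) then 2*k else 0 := by
      intro i
      have := hα (i:ℕ) i.isLt
      rw [αF_idx, hα0] at this
      rw [this]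
      split_ifs <;> ring
    have e : (∑ i, α i • tt i (idx i)) + β • rr (⟨0, by omega⟩ : Fin g) = k • E4 g hg := by
      rw [hβ, zero_smul, add_zero, E4, if_neg (Nat.not_odd_iff_even.mpr hge), add_zero,
        Finset.smul_sum]
      refine Finset.sum_congr rfl fun i _ => ?_
      rw [hαi i]
      split_ifs with h
      · rw [smul_smul]
        congr 1
        ring
      · rw [zero_smul, smul_zero]
    rw [e]
    exact Submodule.smul_mem _ _ (Submodule.subset_span (gmem4 hg))
  · -- g odd
    have hg2 : ¬ Even (g-2) := by rw [Nat.even_iff]; rw [Nat.odd_iff] at hgo; omega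
    have hα0 : αF g α 0 = 0 := by
      have := hα (g-2) (by omega)
      rw [if_neg hg2] at this
      omega
    have hβ : β = -k := by omega
    have hαi : ∀ i : Fin (g-1), α i = if Even (i:ℕ) then 0 else 2*k := by
      intro i
      have := hα (i:ℕ) i.isLt
      rw [αF_idx, hα0] at this
      rw [this]
      split_ifs <;> ring
    have e : (∑ i, α i • tt i (idx i)) + β • rr (⟨0, by omega⟩ : Fin g) =
        k • ((∑ i : Fin (g-1), if Even (i:ℕ) then 0 else (2:ℤ) • tt i (idx i)) -
          rr (⟨0, by omega⟩ : Fin g)) := by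
      rw [hβ, smul_sub, Finset.smul_sum, neg_smul, ← sub_eq_add_neg]
      congr 1
      refine Finset.sum_congr rfl fun i _ => ?_
      rw [hαi i]
      split_ifs with h
      · rw [zero_smul, smul_zero]
      · rw [smul_smul]
        congr 1
        ring
    rw [e]
    exact Submodule.smul_mem _ _ (X_mem hg hgo)

end WithData

end AuxStmt11

/-- The kernel of
`∂((m_1,…,m_{g-1}), m_s, m_ρ) = Σ_i (T_i⁻¹(m_i) − m_i) + (S(m_s) − m_s) + (R(m_ρ) − m_ρ)`
is generated, as an abelian group, by the elements (F1)-(F6). -/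
theorem stmt11 (g : ℕ) (hg : 3 ≤ g) (T : Fin (g-1) → AddAut (MN g)) (hT : IsT T)
    (S : AddAut (MN g)) (hS : IsS S) (R : AddAut (MN g)) (hR : ∀ x, R x = -x) :
    (∃ D : ((Fin (g-1) → MN g) × MN g × MN g) →+ MN g,
      ∀ m, D m = (∑ i : Fin (g-1), ((T i).symm (m.1 i) - m.1 i)) +
        (S m.2.1 - m.2.1) + (R m.2.2 - m.2.2)) ∧
    ∀ D : ((Fin (g-1) → MN g) × MN g × MN g) →+ MN g,
      (∀ m, D m = (∑ i : Fin (g-1), ((T i).symm (m.1 i) - m.1 i)) +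
        (S m.2.1 - m.2.1) + (R m.2.2 - m.2.2)) →
      D.ker = AddSubgroup.closure (kerGens g hg) := by
  constructor
  · refine ⟨AddMonoidHom.mk' (fun m => (∑ i : Fin (g-1), ((T i).symm (m.1 i) - m.1 i)) +
        (S m.2.1 - m.2.1) + (R m.2.2 - m.2.2)) ?_, fun m => rfl⟩
    intro a b
    simp only [Prod.fst_add, Prod.snd_add, Pi.add_apply, map_add]
    have h : ∀ i : Fin (g-1), (T i).symm (a.1 i) + (T i).symm (b.1 i) - (a.1 i + b.1 i) =
        ((T i).symm (a.1 i) - a.1 i) + ((T i).symm (b.1 i) - b.1 i) := by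
      intro i
      abel
    rw [Finset.sum_congr rfl (fun i _ => h i), Finset.sum_add_distrib]
    abel
  · intro D hD
    have hle := closure_le_ker T S R D hg hT hS hR hD
    refine le_antisymm ?_ hle
    intro m hm
    have hconv : ∀ x : (Fin (g-1) → MN g) × MN g × MN g,
        x ∈ Submodule.span ℤ (kerGens g hg) ↔ x ∈ AddSubgroup.closure (kerGens g hg) := by
      intro x
      rw [← Submodule.span_int_eq_addSubgroupClosure, Submodule.mem_toAddSubgroup]
    obtain ⟨α, β, hred⟩ := reduce hg m
    have hDnf : D ((∑ i, α i • tt i (idx i)) + β • rr (⟨0, by omega⟩ : Fin g)) = 0 := by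
      have h1 : D (m - ((∑ i, α i • tt i (idx i)) + β • rr (⟨0, by omega⟩ : Fin g))) = 0 :=
        AddMonoidHom.mem_ker.mp (hle ((hconv _).mp hred))
      have h2 : D m = 0 := AddMonoidHom.mem_ker.mp hm
      rw [map_sub, h2, zero_sub, neg_eq_zero] at h1
      exact h1
    have hmem : m ∈ Submodule.span ℤ (kerGens g hg) := by
      have h3 := nf_mem T S R D hg hT hR hD α β hDnf
      have h4 := add_mem hred h3
      rwa [sub_add_cancel] at h4
    exact (hconv m).mp hmem
end

section
/- For g ≥ 3 there exists an involutive automorphism φ of G_E(g) with φ(t_j) = t_j^{−1} for j = 1,…,g−1 and φ(ρ) = ρ, and the semidirect product G_E(g) ⋊ Z/2, where the nontrivial element of Z/2 acts by φ, is isomorphic to G_C(g) via the map sending t_j to t_j, ρ to ρ, and the generator of Z/2 to s. In particular, the natural homomorphism G_E(g) → G_C(g) (t_j ↦ t_j, ρ ↦ ρ) is injective and its image is a subgroup of index 2 in G_C(g). -/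
namespace BraidAux

variable {G : Type*} [Group G]

/-- ascending product `a i * a (i+1) * ... * a k`; `1` if `k < i`. -/
def asc (a : ℕ → G) (i k : ℕ) : G := ((List.range (k + 1 - i)).map fun t => a (i + t)).prod

/-- descending product `a k * a (k-1) * ... * a i`; `1` if `k < i`. -/
def desc (a : ℕ → G) (i k : ℕ) : G := ((List.range (k + 1 - i)).map fun t => a (k - t)).prod

lemma asc_empty (a : ℕ → G) {i k : ℕ} (h : k + 1 ≤ i) : asc a i k = 1 := by
  unfold asc; rw [Nat.sub_eq_zero_of_le h, List.range_zero, List.map_nil, List.prod_nil]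

lemma desc_empty (a : ℕ → G) {i k : ℕ} (h : k + 1 ≤ i) : desc a i k = 1 := by
  unfold desc; rw [Nat.sub_eq_zero_of_le h, List.range_zero, List.map_nil, List.prod_nil]

lemma asc_single (a : ℕ → G) (i : ℕ) : asc a i i = a i := by
  unfold asc
  rw [show i + 1 - i = 1 by omega, List.range_succ, List.range_zero]
  simp

lemma desc_single (a : ℕ → G) (i : ℕ) : desc a i i = a i := by
  unfold desc
  rw [show i + 1 - i = 1 by omega, List.range_succ, List.range_zero]
  simp

lemma asc_succ (a : ℕ → G) {i k : ℕ} (h : i ≤ k + 1) :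
    asc a i (k + 1) = asc a i k * a (k + 1) := by
  unfold asc
  rw [show k + 1 + 1 - i = (k + 1 - i) + 1 by omega, List.range_succ, List.map_append,
    List.prod_append]
  simp only [List.map_cons, List.map_nil, List.prod_cons, List.prod_nil, mul_one]
  congr 2
  omega

lemma asc_front (a : ℕ → G) {i k : ℕ} (h : i ≤ k) :
    asc a i k = a i * asc a (i + 1) k := by
  unfold asc
  rw [show k + 1 - i = (k - i) + 1 by omega, List.range_succ_eq_map, List.map_cons,
    List.prod_cons, List.map_map]
  rw [show k + 1 - (i + 1) = k - i by omega, add_zero]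
  have : ((fun t => a (i + t)) ∘ Nat.succ) = fun t => a (i + 1 + t) := by
    funext t
    simp only [Function.comp_apply]
    congr 1
    omega
  rw [this]

lemma desc_succ (a : ℕ → G) {i k : ℕ} (h : i ≤ k + 1) :
    desc a i (k + 1) = a (k + 1) * desc a i k := by
  unfold desc
  rw [show k + 1 + 1 - i = (k + 1 - i) + 1 by omega, List.range_succ_eq_map, List.map_cons,
    List.prod_cons, List.map_map]
  rw [show k + 1 - 0 = k + 1 by omega]
  have : ((fun t => a (k + 1 - t)) ∘ Nat.succ) = fun t => a (k - t) := by
    funext t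
    simp only [Function.comp_apply]
    congr 1
    omega
  rw [this]

lemma desc_front (a : ℕ → G) {i k : ℕ} (h : i ≤ k) :
    desc a i k = desc a (i + 1) k * a i := by
  unfold desc
  rw [show k + 1 - i = (k - i) + 1 by omega, List.range_succ, List.map_append, List.prod_append,
    show k + 1 - (i + 1) = k - i by omega]
  simp only [List.map_cons, List.map_nil, List.prod_cons, List.prod_nil, mul_one]
  congr 2
  omega

lemma asc_split (a : ℕ → G) {i j k : ℕ} (h1 : i ≤ j + 1) (h2 : j ≤ k) :
    asc a i k = asc a i j * asc a (j + 1) k := by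
  induction k, h2 using Nat.le_induction with
  | base => rw [asc_empty a (by omega : j + 1 ≤ j + 1), mul_one]
  | succ k hk ih =>
      rw [asc_succ a (by omega : i ≤ k + 1), ih, asc_succ a (by omega : j + 1 ≤ k + 1), mul_assoc]

lemma desc_split (a : ℕ → G) {i j k : ℕ} (h1 : i ≤ j + 1) (h2 : j ≤ k) :
    desc a i k = desc a (j + 1) k * desc a i j := by
  induction k, h2 using Nat.le_induction with
  | base => rw [desc_empty a (by omega : j + 1 ≤ j + 1), one_mul]
  | succ k hk ih =>
      rw [desc_succ a (by omega : i ≤ k + 1), ih, desc_succ a (by omega : j + 1 ≤ k + 1),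
        mul_assoc]

section Rels

variable (a : ℕ → G) (m : ℕ)
variable (Hc : ∀ i j, 1 ≤ i → i + 2 ≤ j → j ≤ m → Commute (a i) (a j))
variable (Hb : ∀ i, 1 ≤ i → i + 1 ≤ m → a i * a (i + 1) * a i = a (i + 1) * a i * a (i + 1))

include Hc in
lemma comm_asc_right {i k j : ℕ} (h1 : 1 ≤ i) (h2 : k + 2 ≤ j) (h3 : j ≤ m) :
    Commute (asc a i k) (a j) := by
  induction k with
  | zero => rw [asc_empty a (by omega : 0 + 1 ≤ i)]; exact Commute.one_left _
  | succ k ih =>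
      by_cases hik : i ≤ k + 1
      · rw [asc_succ a hik]
        exact Commute.mul_left (ih (by omega)) (Hc (k + 1) j (by omega) (by omega) h3)
      · rw [asc_empty a (by omega)]; exact Commute.one_left _

include Hc in
lemma comm_asc_left {i k j : ℕ} (h1 : 1 ≤ j) (h2 : j + 2 ≤ i) (h3 : k ≤ m) :
    Commute (a j) (asc a i k) := by
  induction k with
  | zero => rw [asc_empty a (by omega : 0 + 1 ≤ i)]; exact Commute.one_right _
  | succ k ih =>
      by_cases hik : i ≤ k + 1
      · rw [asc_succ a hik]
        exact Commute.mul_right (ih (by omega)) (Hc j (k + 1) h1 (by omega) (by omega))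
      · rw [asc_empty a (by omega)]; exact Commute.one_right _

include Hc in
lemma comm_desc_right {i k j : ℕ} (h1 : 1 ≤ i) (h2 : k + 2 ≤ j) (h3 : j ≤ m) :
    Commute (desc a i k) (a j) := by
  induction k with
  | zero => rw [desc_empty a (by omega : 0 + 1 ≤ i)]; exact Commute.one_left _
  | succ k ih =>
      by_cases hik : i ≤ k + 1
      · rw [desc_succ a hik]
        exact Commute.mul_left (Hc (k + 1) j (by omega) (by omega) h3) (ih (by omega))
      · rw [desc_empty a (by omega)]; exact Commute.one_left _

include Hc in
lemma comm_desc_left {i k j : ℕ} (h1 : 1 ≤ j) (h2 : j + 2 ≤ i) (h3 : k ≤ m) :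
    Commute (a j) (desc a i k) := by
  induction k with
  | zero => rw [desc_empty a (by omega : 0 + 1 ≤ i)]; exact Commute.one_right _
  | succ k ih =>
      by_cases hik : i ≤ k + 1
      · rw [desc_succ a hik]
        exact Commute.mul_right (Hc j (k + 1) h1 (by omega) (by omega)) (ih (by omega))
      · rw [desc_empty a (by omega)]; exact Commute.one_right _

include Hc Hb in
lemma shiftC {i j k : ℕ} (h1 : 1 ≤ i) (h2 : i ≤ j) (h3 : j + 1 ≤ k) (h4 : k ≤ m) :
    asc a i k * a j = a (j + 1) * asc a i k := by
  obtain ⟨p, rfl⟩ : ∃ p, j = p + 1 := ⟨j - 1, by omega⟩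
  have hsplit : asc a i k = asc a i (p + 2) * asc a (p + 3) k :=
    asc_split a (by omega) (by omega)
  have h5 : asc a i (p + 2) = asc a i p * a (p + 1) * a (p + 2) := by
    rw [asc_succ a (by omega : i ≤ p + 2), asc_succ a (by omega : i ≤ p + 1)]
  have hcl : a (p + 1) * asc a (p + 3) k = asc a (p + 3) k * a (p + 1) :=
    (comm_asc_left a m Hc (by omega) (by omega) h4).eq
  have hcr : asc a i p * a (p + 2) = a (p + 2) * asc a i p :=
    (comm_asc_right a m Hc h1 (by omega) (by omega)).eq
  calc asc a i k * a (p + 1)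
      = asc a i (p + 2) * (asc a (p + 3) k * a (p + 1)) := by rw [hsplit, mul_assoc]
    _ = asc a i (p + 2) * (a (p + 1) * asc a (p + 3) k) := by rw [← hcl]
    _ = asc a i p * (a (p + 1) * a (p + 2) * a (p + 1)) * asc a (p + 3) k := by
        rw [h5]; simp only [mul_assoc]
    _ = asc a i p * (a (p + 2) * a (p + 1) * a (p + 2)) * asc a (p + 3) k := by
        rw [Hb (p + 1) (by omega) (by omega)]
    _ = (asc a i p * a (p + 2)) * (a (p + 1) * a (p + 2) * asc a (p + 3) k) := by
        simp only [mul_assoc]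
    _ = (a (p + 2) * asc a i p) * (a (p + 1) * a (p + 2) * asc a (p + 3) k) := by rw [hcr]
    _ = a (p + 2) * (asc a i (p + 2) * asc a (p + 3) k) := by rw [h5]; simp only [mul_assoc]
    _ = a (p + 2) * asc a i k := by rw [← hsplit]

include Hc Hb in
lemma shiftR {i j k : ℕ} (h1 : 1 ≤ i) (h2 : i + 1 ≤ j) (h3 : j ≤ k) (h4 : k ≤ m) :
    desc a i k * a j = a (j - 1) * desc a i k := by
  obtain ⟨p, rfl⟩ : ∃ p, j = p + 2 := ⟨j - 2, by omega⟩
  have hsplit : desc a i k = desc a (p + 3) k * desc a i (p + 2) :=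
    desc_split a (by omega) (by omega)
  have h5 : desc a i (p + 2) = a (p + 2) * a (p + 1) * desc a i p := by
    rw [desc_succ a (by omega : i ≤ p + 2), desc_succ a (by omega : i ≤ p + 1), mul_assoc]
  have hcr : desc a i p * a (p + 2) = a (p + 2) * desc a i p :=
    (comm_desc_right a m Hc h1 (by omega) (by omega)).eq
  have hcl : a (p + 1) * desc a (p + 3) k = desc a (p + 3) k * a (p + 1) :=
    (comm_desc_left a m Hc (by omega) (by omega) h4).eq
  have goal2 : desc a i k * a (p + 2) = a (p + 1) * desc a i k := by
    calc desc a i k * a (p + 2)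
        = desc a (p + 3) k * (a (p + 2) * a (p + 1) * (desc a i p * a (p + 2))) := by
          rw [hsplit, h5]; simp only [mul_assoc]
      _ = desc a (p + 3) k * (a (p + 2) * a (p + 1) * (a (p + 2) * desc a i p)) := by rw [hcr]
      _ = (desc a (p + 3) k * (a (p + 2) * a (p + 1) * a (p + 2))) * desc a i p := by
          simp only [mul_assoc]
      _ = (desc a (p + 3) k * (a (p + 1) * a (p + 2) * a (p + 1))) * desc a i p := by
          rw [Hb (p + 1) (by omega) (by omega)]
      _ = (desc a (p + 3) k * a (p + 1)) * (a (p + 2) * a (p + 1) * desc a i p) := by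
          simp only [mul_assoc]
      _ = (a (p + 1) * desc a (p + 3) k) * (a (p + 2) * a (p + 1) * desc a i p) := by
          rw [← hcl]
      _ = a (p + 1) * (desc a (p + 3) k * desc a i (p + 2)) := by
          rw [h5]; simp only [mul_assoc]
      _ = a (p + 1) * desc a i k := by rw [← hsplit]
  simpa using goal2

end Rels

/-- the Garside-type element `Δ_k = c_k c_{k-1} ⋯ c_1`. -/
def Dl (a : ℕ → G) : ℕ → G
  | 0 => 1
  | k + 1 => asc a 1 (k + 1) * Dl a k

/-- `Δ` built the other way: `F_k = r_1 r_2 ⋯ r_k`. -/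
def Fl (a : ℕ → G) : ℕ → G
  | 0 => 1
  | k + 1 => Fl a k * desc a 1 (k + 1)

section Rels2

variable (a : ℕ → G) (m : ℕ)
variable (Hc : ∀ i j, 1 ≤ i → i + 2 ≤ j → j ≤ m → Commute (a i) (a j))
variable (Hb : ∀ i, 1 ≤ i → i + 1 ≤ m → a i * a (i + 1) * a i = a (i + 1) * a i * a (i + 1))

include Hc in
lemma commD {k j : ℕ} (h2 : k + 2 ≤ j) (h3 : j ≤ m) : Commute (Dl a k) (a j) := by
  induction k with
  | zero => exact Commute.one_left _
  | succ k ih =>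
      rw [Dl]
      exact Commute.mul_left (comm_asc_right a m Hc (by omega) (by omega) h3) (ih (by omega))

include Hc Hb in
lemma formE : ∀ k, k + 1 ≤ m → asc a 1 (k + 1) * Dl a k = Dl a k * desc a 1 (k + 1) := by
  intro k
  induction k with
  | zero =>
      intro _
      rw [Dl, asc_single, desc_single, one_mul, mul_one]
  | succ k ih =>
      intro hm
      have ih' := ih (by omega)
      have hD : Dl a k * a (k + 2) = a (k + 2) * Dl a k :=
        (commD a m Hc (by omega) (by omega)).eq
      calc asc a 1 (k + 2) * Dl a (k + 1)
          = asc a 1 (k + 2) * (asc a 1 (k + 1) * Dl a k) := by rw [Dl]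
        _ = asc a 1 (k + 2) * (Dl a k * desc a 1 (k + 1)) := by rw [ih']
        _ = asc a 1 (k + 1) * (a (k + 2) * Dl a k) * desc a 1 (k + 1) := by
            rw [asc_succ a (by omega : 1 ≤ k + 2)]; simp only [mul_assoc]
        _ = asc a 1 (k + 1) * (Dl a k * a (k + 2)) * desc a 1 (k + 1) := by rw [hD]
        _ = (asc a 1 (k + 1) * Dl a k) * (a (k + 2) * desc a 1 (k + 1)) := by
            simp only [mul_assoc]
        _ = Dl a (k + 1) * desc a 1 (k + 2) := by
            rw [Dl, desc_succ a (by omega : 1 ≤ k + 2)]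

include Hc Hb in
lemma Dform2 {k : ℕ} (hm : k + 1 ≤ m) : Dl a (k + 1) = Dl a k * desc a 1 (k + 1) := by
  rw [Dl, formE a m Hc Hb k hm]

include Hc Hb in
lemma Dl_eq_Fl {k : ℕ} (hm : k ≤ m) : Dl a k = Fl a k := by
  induction k with
  | zero => rfl
  | succ k ih => rw [Dform2 a m Hc Hb hm, Fl, ih (by omega)]

include Hc Hb in
lemma Vlem : ∀ n, n + 1 ≤ m →
    desc a 1 n * desc a 1 (n + 1) = desc a 1 (n + 1) * desc a 2 (n + 1) := by
  intro n
  induction n with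
  | zero =>
      intro _
      rw [show desc a 1 0 = 1 from desc_empty a (by omega), desc_empty a (by omega : 1 + 1 ≤ 2),
        one_mul, mul_one]
  | succ n ih =>
      intro hm
      have ih' := ih (by omega)
      have hr1 : desc a 1 (n + 1) = a (n + 1) * desc a 1 n := desc_succ a (by omega)
      have hr2 : desc a 1 (n + 2) = a (n + 2) * desc a 1 (n + 1) := desc_succ a (by omega)
      have hq2 : desc a 2 (n + 2) = a (n + 2) * desc a 2 (n + 1) := desc_succ a (by omega)
      have hcomm : desc a 1 n * a (n + 2) = a (n + 2) * desc a 1 n :=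
        (comm_desc_right a m Hc (by omega) (by omega) (by omega)).eq
      rw [hr1] at ih'
      rw [hr2, hq2, hr1]
      set A := desc a 1 n with hA
      set B := desc a 2 (n + 1) with hB
      set x := a (n + 1) with hx
      set y := a (n + 2) with hy
      -- ih' : A * (x * A) = (x * A) * B,  hcomm : A * y = y * A,  braid : x*y*x = y*x*y
      calc (x * A) * (y * (x * A))
          = x * ((A * y) * (x * A)) := by simp only [mul_assoc]
        _ = x * ((y * A) * (x * A)) := by rw [hcomm]
        _ = (x * y) * (A * (x * A)) := by simp only [mul_assoc]
        _ = (x * y) * ((x * A) * B) := by rw [ih']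
        _ = (x * y * x) * (A * B) := by simp only [mul_assoc]
        _ = (y * x * y) * (A * B) := by rw [Hb (n + 1) (by omega) (by omega)]
        _ = (y * x) * ((y * A) * B) := by simp only [mul_assoc]
        _ = (y * x) * ((A * y) * B) := by rw [← hcomm]
        _ = (y * (x * A)) * (y * B) := by simp only [mul_assoc]

include Hc Hb in
lemma descShift {k : ℕ} (hk : k ≤ m) :
    ∀ j, j + 2 ≤ k → asc a 2 k * desc a 2 (j + 1) = desc a 3 (j + 2) * asc a 2 k := by
  intro j
  induction j with
  | zero =>
      intro _
      rw [desc_empty a (by omega : 1 + 1 ≤ 2), desc_empty a (by omega : 2 + 1 ≤ 3), mul_one,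
        one_mul]
  | succ j ih =>
      intro hjk
      have ih' := ih (by omega)
      have hshift : asc a 2 k * a (j + 2) = a (j + 3) * asc a 2 k := by
        have := shiftC a m Hc Hb (by omega : 1 ≤ 2) (by omega : 2 ≤ j + 2)
          (by omega : j + 2 + 1 ≤ k) hk
        simpa using this
      calc asc a 2 k * desc a 2 (j + 2)
          = (asc a 2 k * a (j + 2)) * desc a 2 (j + 1) := by
            rw [desc_succ a (by omega : 2 ≤ j + 2)]; simp only [mul_assoc]
        _ = a (j + 3) * (asc a 2 k * desc a 2 (j + 1)) := by rw [hshift]; simp only [mul_assoc]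
        _ = a (j + 3) * desc a 3 (j + 2) * asc a 2 k := by rw [ih']; simp only [mul_assoc]
        _ = desc a 3 (j + 3) * asc a 2 k := by rw [desc_succ a (by omega : 3 ≤ j + 3)]

include Hc in
lemma Xa1 {k : ℕ} (hk2 : 2 ≤ k) (hk : k ≤ m) :
    asc a 2 k * a 1 = a 2 * a 1 * (a 2)⁻¹ * asc a 2 k := by
  have h : asc a 2 k = a 2 * asc a 3 k := asc_front a (hk2 : 2 ≤ k)
  have hc : a 1 * asc a 3 k = asc a 3 k * a 1 :=
    (comm_asc_left a m Hc (by omega) (by omega) hk).eq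
  calc asc a 2 k * a 1
      = a 2 * (asc a 3 k * a 1) := by rw [h, mul_assoc]
    _ = a 2 * (a 1 * asc a 3 k) := by rw [← hc]
    _ = a 2 * a 1 * (a 2)⁻¹ * asc a 2 k := by
        rw [h]; simp only [mul_assoc, inv_mul_cancel_left]

include Hc Hb in
lemma Wlem {k : ℕ} (hk : k ≤ m) :
    ∀ j, j + 1 ≤ k → (asc a 2 k) ^ j * a 1
      = desc a 2 (j + 1) * a 1 * (desc a 2 (j + 1))⁻¹ * (asc a 2 k) ^ j := by
  intro j
  induction j with
  | zero =>
      intro _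
      rw [desc_empty a (by omega : 1 + 1 ≤ 2)]
      simp
  | succ j ih =>
      intro hjk
      have ih' := ih (by omega)
      have hds := descShift a m Hc Hb hk j (by omega)
      have hds' : asc a 2 k * (desc a 2 (j + 1))⁻¹ = (desc a 3 (j + 2))⁻¹ * asc a 2 k := by
        rw [mul_inv_eq_iff_eq_mul, mul_assoc, hds, ← mul_assoc, inv_mul_cancel, one_mul]
      have hx := Xa1 a m Hc (by omega) hk
      have hfront : desc a 2 (j + 2) = desc a 3 (j + 2) * a 2 := desc_front a (by omega)
      calc (asc a 2 k) ^ (j + 1) * a 1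
          = asc a 2 k * ((asc a 2 k) ^ j * a 1) := by rw [pow_succ', mul_assoc]
        _ = ((asc a 2 k * desc a 2 (j + 1)) * a 1) * ((desc a 2 (j + 1))⁻¹ * (asc a 2 k) ^ j) := by
            rw [ih']; simp only [mul_assoc]
        _ = (desc a 3 (j + 2) * (asc a 2 k * a 1)) * ((desc a 2 (j + 1))⁻¹ * (asc a 2 k) ^ j) := by
            rw [hds]; simp only [mul_assoc]
        _ = desc a 3 (j + 2) * (a 2 * a 1 * (a 2)⁻¹) *
              ((asc a 2 k * (desc a 2 (j + 1))⁻¹) * (asc a 2 k) ^ j) := by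
            rw [hx]; simp only [mul_assoc]
        _ = desc a 3 (j + 2) * (a 2 * a 1 * (a 2)⁻¹) *
              ((desc a 3 (j + 2))⁻¹ * (asc a 2 k * (asc a 2 k) ^ j)) := by
            rw [hds']; simp only [mul_assoc]
        _ = (desc a 3 (j + 2) * a 2) * a 1 * (((desc a 3 (j + 2)) * a 2)⁻¹ *
              (asc a 2 k) ^ (j + 1)) := by
            rw [pow_succ']; simp only [mul_inv_rev, mul_assoc]
        _ = desc a 2 (j + 2) * a 1 * (desc a 2 (j + 2))⁻¹ * (asc a 2 k) ^ (j + 1) := by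
            rw [hfront]; simp only [mul_assoc]

include Hc Hb in
lemma powLemma {k : ℕ} (hk : k ≤ m) :
    ∀ n, n ≤ k → (a 1 * asc a 2 k) ^ n = desc a 1 n * (asc a 2 k) ^ n := by
  intro n
  induction n with
  | zero =>
      intro _
      rw [desc_empty a (by omega : 0 + 1 ≤ 1)]
      simp
  | succ n ih =>
      intro hnk
      have ih' := ih (by omega)
      have hW := Wlem a m Hc Hb hk n (by omega)
      have hfront : desc a 1 (n + 1) = desc a 2 (n + 1) * a 1 := desc_front a (by omega)
      have hV := Vlem a m Hc Hb n (by omega)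
      calc (a 1 * asc a 2 k) ^ (n + 1)
          = (a 1 * asc a 2 k) ^ n * (a 1 * asc a 2 k) := by rw [pow_succ]
        _ = desc a 1 n * (((asc a 2 k) ^ n * a 1) * asc a 2 k) := by
            rw [ih']; simp only [mul_assoc]
        _ = desc a 1 n * (desc a 2 (n + 1) * a 1 * (desc a 2 (n + 1))⁻¹ *
              ((asc a 2 k) ^ n * asc a 2 k)) := by rw [hW]; simp only [mul_assoc]
        _ = (desc a 1 n * desc a 1 (n + 1)) * ((desc a 2 (n + 1))⁻¹ * (asc a 2 k) ^ (n + 1)) := by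
            rw [hfront, pow_succ]; simp only [mul_assoc]
        _ = desc a 1 (n + 1) * (desc a 2 (n + 1) * (desc a 2 (n + 1))⁻¹) * (asc a 2 k) ^ (n+1) := by
            rw [hV]; simp only [mul_assoc]
        _ = desc a 1 (n + 1) * (asc a 2 k) ^ (n + 1) := by
            rw [mul_inv_cancel, mul_one]

include Hc Hb in
lemma ascPastR {k : ℕ} (hk1 : 1 ≤ k) (hk : k ≤ m) :
    ∀ i, i ≤ k - 1 → asc a 1 i * desc a 1 k = desc a 1 k * asc a 2 (i + 1) := by
  intro i
  induction i with
  | zero =>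
      intro _
      rw [asc_empty a (by omega : 0 + 1 ≤ 1), asc_empty a (by omega : 0 + 1 + 1 ≤ 2), one_mul,
        mul_one]
  | succ i ih =>
      intro hik
      have ih' := ih (by omega)
      have hs : desc a 1 k * a (i + 2) = a (i + 1) * desc a 1 k := by
        have := shiftR a m Hc Hb (by omega : 1 ≤ 1) (by omega : 1 + 1 ≤ i + 2)
          (by omega : i + 2 ≤ k) hk
        simpa using this
      calc asc a 1 (i + 1) * desc a 1 k
          = asc a 1 i * (a (i + 1) * desc a 1 k) := by
            rw [asc_succ a (by omega : 1 ≤ i + 1)]; simp only [mul_assoc]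
        _ = asc a 1 i * (desc a 1 k * a (i + 2)) := by rw [hs]
        _ = (asc a 1 i * desc a 1 k) * a (i + 2) := by simp only [mul_assoc]
        _ = desc a 1 k * (asc a 2 (i + 1) * a (i + 2)) := by rw [ih']; simp only [mul_assoc]
        _ = desc a 1 k * asc a 2 (i + 2) := by rw [asc_succ a (by omega : 2 ≤ i + 2)]

include Hc Hb in
lemma semiconj {k : ℕ} (hk1 : 1 ≤ k) (hk : k ≤ m) (n : ℕ) :
    (asc a 1 (k - 1)) ^ n * desc a 1 k = desc a 1 k * (asc a 2 k) ^ n := by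
  have hbase : asc a 1 (k - 1) * desc a 1 k = desc a 1 k * asc a 2 k := by
    have := ascPastR a m Hc Hb hk1 hk (k - 1) (le_refl _)
    rwa [show k - 1 + 1 = k by omega] at this
  induction n with
  | zero => rw [pow_zero, pow_zero, one_mul, mul_one]
  | succ n ih =>
      calc (asc a 1 (k - 1)) ^ (n + 1) * desc a 1 k
          = asc a 1 (k - 1) * ((asc a 1 (k - 1)) ^ n * desc a 1 k) := by
            rw [pow_succ', mul_assoc]
        _ = (asc a 1 (k - 1) * desc a 1 k) * (asc a 2 k) ^ n := by
            rw [ih]; simp only [mul_assoc]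
        _ = desc a 1 k * (asc a 2 k) ^ (n + 1) := by
            rw [hbase, pow_succ']; simp only [mul_assoc]

include Hc Hb in
lemma Slem {k : ℕ} (hk1 : 1 ≤ k) (hk : k ≤ m) :
    (asc a 1 k) ^ k = desc a 1 k * (asc a 2 k) ^ k := by
  rw [asc_front a (hk1 : 1 ≤ k)]
  exact powLemma a m Hc Hb hk k (le_refl _)

include Hc Hb in
lemma Tlem : ∀ k, k ≤ m → (asc a 1 k) ^ (k + 1) = Dl a k * Dl a k := by
  intro k
  induction k with
  | zero =>
      intro _
      rw [asc_empty a (by omega : 0 + 1 ≤ 1), Dl, one_pow, one_mul]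
  | succ k ih =>
      intro hm
      have ih' := ih (by omega)
      have hS := Slem a m Hc Hb (by omega : 1 ≤ k + 1) hm
      have hsc := semiconj a m Hc Hb (by omega : 1 ≤ k + 1) hm (k + 1)
      rw [show k + 1 - 1 = k by omega] at hsc
      calc (asc a 1 (k + 1)) ^ (k + 2)
          = asc a 1 (k + 1) * (asc a 1 (k + 1)) ^ (k + 1) := by rw [pow_succ']
        _ = asc a 1 (k + 1) * (desc a 1 (k + 1) * (asc a 2 (k + 1)) ^ (k + 1)) := by rw [hS]
        _ = asc a 1 (k + 1) * ((asc a 1 k) ^ (k + 1) * desc a 1 (k + 1)) := by rw [← hsc]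
        _ = asc a 1 (k + 1) * (Dl a k * Dl a k * desc a 1 (k + 1)) := by rw [ih']
        _ = (asc a 1 (k + 1) * Dl a k) * (Dl a k * desc a 1 (k + 1)) := by
            simp only [mul_assoc]
        _ = Dl a (k + 1) * Dl a (k + 1) := by rw [← Dform2 a m Hc Hb hm, Dl]

end Rels2

lemma op_asc (a : ℕ → G) : ∀ k i, asc (fun t => MulOpposite.op (a t)) i k
    = MulOpposite.op (desc a i k) := by
  intro k
  induction k with
  | zero =>
      intro i
      match i with
      | 0 => rw [asc_single, desc_single]
      | i + 1 => rw [asc_empty _ (by omega), desc_empty a (by omega), MulOpposite.op_one]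
  | succ k ih =>
      intro i
      by_cases hik : i ≤ k + 1
      · rw [asc_succ _ hik, desc_succ a hik, ih, MulOpposite.op_mul]
      · rw [asc_empty _ (by omega), desc_empty a (by omega), MulOpposite.op_one]

lemma op_Dl (a : ℕ → G) : ∀ k, Dl (fun t => MulOpposite.op (a t)) k = MulOpposite.op (Fl a k) := by
  intro k
  induction k with
  | zero => rw [Dl, Fl, MulOpposite.op_one]
  | succ k ih => rw [Dl, Fl, op_asc, ih, ← MulOpposite.op_mul]

/-- Main abstract result: given braid relations on `a 1, …, a m`, the `(m+1)`-st power of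
the ascending product equals that of the descending product. -/
theorem braid_eq (a : ℕ → G) (m : ℕ)
    (Hc : ∀ i j, 1 ≤ i → i + 2 ≤ j → j ≤ m → Commute (a i) (a j))
    (Hb : ∀ i, 1 ≤ i → i + 1 ≤ m → a i * a (i + 1) * a i = a (i + 1) * a i * a (i + 1)) :
    (asc a 1 m) ^ (m + 1) = (desc a 1 m) ^ (m + 1) := by
  have h1 : (asc a 1 m) ^ (m + 1) = Dl a m * Dl a m := Tlem a m Hc Hb m (le_refl _)
  set b : ℕ → Gᵐᵒᵖ := fun t => MulOpposite.op (a t) with hb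
  have Hc' : ∀ i j, 1 ≤ i → i + 2 ≤ j → j ≤ m → Commute (b i) (b j) := by
    intro i j u v w
    have h := (Hc i j u v w).symm.eq
    show b i * b j = b j * b i
    simp only [hb, ← MulOpposite.op_mul, h]
  have Hb' : ∀ i, 1 ≤ i → i + 1 ≤ m → b i * b (i + 1) * b i = b (i + 1) * b i * b (i + 1) := by
    intro i u v
    show _ = _
    simp only [hb, ← MulOpposite.op_mul, ← mul_assoc]
    rw [Hb i u v]
  have h2 : (asc b 1 m) ^ (m + 1) = Dl b m * Dl b m := Tlem b m Hc' Hb' m (le_refl _)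
  rw [show asc b 1 m = MulOpposite.op (desc a 1 m) from op_asc a m 1, op_Dl a,
    ← MulOpposite.op_pow, ← MulOpposite.op_mul] at h2
  have h3 : (desc a 1 m) ^ (m + 1) = Fl a m * Fl a m := MulOpposite.op_injective h2
  rw [h1, h3, Dl_eq_Fl a m Hc Hb (le_refl m)]

end BraidAux

section GlueLemmas

variable {H : Type*} [Group H]

open BraidAux

lemma range_map_eq_ofFn {M : ℕ} (u : Fin M → H) (b : ℕ → H)
    (hb : ∀ t : ℕ, (ht : t < M) → b (1 + t) = u ⟨t, ht⟩) :
    (List.range M).map (fun t => b (1 + t)) = List.ofFn u := by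
  apply List.ext_getElem
  · simp
  · intro n h1 h2
    simp only [List.getElem_map, List.getElem_range, List.getElem_ofFn]
    exact hb n (by simpa using h2)

lemma asc_eq_ofFn {M : ℕ} (u : Fin M → H) (b : ℕ → H)
    (hb : ∀ t : ℕ, (ht : t < M) → b (1 + t) = u ⟨t, ht⟩) :
    asc b 1 M = (List.ofFn u).prod := by
  unfold asc
  rw [show M + 1 - 1 = M by omega, range_map_eq_ofFn u b hb]

lemma range_map_inv_prod (b : ℕ → H) : ∀ M : ℕ,
    ((List.range M).map (fun t => (b (1 + t))⁻¹)).prod = (desc b 1 M)⁻¹ := by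
  intro M
  induction M with
  | zero => simp [desc_empty b (by omega : 0 + 1 ≤ 1)]
  | succ M ih =>
      rw [List.range_succ, List.map_append, List.prod_append, desc_succ b (by omega : 1 ≤ M + 1)]
      simp only [List.map_cons, List.map_nil, List.prod_cons, List.prod_nil, mul_one, ih,
        mul_inv_rev]
      rw [show 1 + M = M + 1 by omega]

lemma ofFn_inv_prod {M : ℕ} (u : Fin M → H) (b : ℕ → H)
    (hb : ∀ t : ℕ, (ht : t < M) → b (1 + t) = u ⟨t, ht⟩) :
    (List.ofFn (fun i => (u i)⁻¹)).prod = (desc b 1 M)⁻¹ := by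
  rw [← range_map_inv_prod b M, range_map_eq_ofFn (fun i => (u i)⁻¹) (fun t => (b t)⁻¹)
    (fun t ht => by show (b (1 + t))⁻¹ = (u ⟨t, ht⟩)⁻¹; rw [hb t ht])]

end GlueLemmas
open FreeGroup in
/-- Relations (E1)-(E5). The generator `some i` is `t_{i+1}` and `none` is `ρ`. -/
def relsE (g : ℕ) : Set (FreeGroup (Option (Fin (g-1)))) :=
  -- (E1)
  {r | ∃ j k : Fin (g-1), ((j : ℕ) + 1 < k ∨ (k : ℕ) + 1 < j) ∧
        r = of (some k) * of (some j) * (of (some j) * of (some k))⁻¹} ∪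
  -- (E2)
  {r | ∃ j k : Fin (g-1), (j : ℕ) + 1 = k ∧
        r = of (some j) * of (some k) * of (some j) *
            (of (some k) * of (some j) * of (some k))⁻¹} ∪
  -- (E3)
  {(List.ofFn (fun i : Fin (g-1) => of (some i : Option (Fin (g-1))))).prod ^ g *
      (if Odd g then (of (none : Option (Fin (g-1))))⁻¹ else 1)} ∪
  -- (E4)
  {of (none : Option (Fin (g-1))) ^ 2} ∪
  -- (E5)  ρ t_j ρ = t_j
  {r | ∃ j : Fin (g-1), r = of none * of (some j) * of none * (of (some j))⁻¹}

/-- `G_E(g)`, a presentation of the group `M^{h+}(N_g)`. -/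
def GE (g : ℕ) : Type := PresentedGroup (relsE g)

instance (g : ℕ) : Group (GE g) := by unfold GE; infer_instance

/-- The generator `t_{i+1}` of `G_E(g)`. -/
def GE.t {g : ℕ} (i : Fin (g-1)) : GE g := PresentedGroup.of (rels := relsE g) (some i)

/-- The generator `ρ` of `G_E(g)`. -/
def GE.ρ (g : ℕ) : GE g := PresentedGroup.of (rels := relsE g) none

open FreeGroup in
/-- Relations (C1)-(C8). The generator `Sum.inl i` is `t_{i+1}`, `Sum.inr false` is `s`,
and `Sum.inr true` is `ρ`. -/
def relsC (g : ℕ) : Set (FreeGroup (Fin (g-1) ⊕ Bool)) :=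
  -- (C1)
  {r | ∃ j k : Fin (g-1), ((j : ℕ) + 1 < k ∨ (k : ℕ) + 1 < j) ∧
        r = of (.inl k) * of (.inl j) * (of (.inl j) * of (.inl k))⁻¹} ∪
  -- (C2)
  {r | ∃ j k : Fin (g-1), (j : ℕ) + 1 = k ∧
        r = of (.inl j) * of (.inl k) * of (.inl j) *
            (of (.inl k) * of (.inl j) * of (.inl k))⁻¹} ∪
  -- (C3)
  {(List.ofFn (fun i : Fin (g-1) => of (Sum.inl i : Fin (g-1) ⊕ Bool))).prod ^ g *
      (if Odd g then (of (Sum.inr true : Fin (g-1) ⊕ Bool))⁻¹ else 1)} ∪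
  -- (C4)
  {of (Sum.inr false : Fin (g-1) ⊕ Bool) ^ 2} ∪
  -- (C5)  s t_j s = t_j⁻¹
  {r | ∃ j : Fin (g-1),
        r = of (.inr false) * of (.inl j) * of (.inr false) * of (.inl j)} ∪
  -- (C6)
  {of (Sum.inr true : Fin (g-1) ⊕ Bool) ^ 2} ∪
  -- (C7)  ρ t_j ρ = t_j
  {r | ∃ j : Fin (g-1),
        r = of (.inr true) * of (.inl j) * of (.inr true) * (of (.inl j))⁻¹} ∪
  -- (C8)  ρ s ρ = s
  {of (Sum.inr true : Fin (g-1) ⊕ Bool) * of (.inr false) * of (.inr true) *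
      (of (.inr false))⁻¹}

/-- `G_C(g)`, a presentation of the hyperelliptic mapping class group `M^h(N_g)`. -/
def GC (g : ℕ) : Type := PresentedGroup (relsC g)

instance (g : ℕ) : Group (GC g) := by unfold GC; infer_instance

/-- The generator `t_{i+1}` of `G_C(g)`. -/
def GC.t {g : ℕ} (i : Fin (g-1)) : GC g := PresentedGroup.of (rels := relsC g) (Sum.inl i)

/-- The generator `s` of `G_C(g)`. -/
def GC.s (g : ℕ) : GC g := PresentedGroup.of (rels := relsC g) (Sum.inr false)

/-- The generator `ρ` of `G_C(g)`. -/
def GC.ρ (g : ℕ) : GC g := PresentedGroup.of (rels := relsC g) (Sum.inr true)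


namespace Stmt17Aux

open BraidAux

/-- the involution `z ↦ 1 / u` hom from `ℤ/2`. -/
def invo {M : Type*} [Monoid M] (u : M) (hu : u * u = 1) : Multiplicative (ZMod 2) →* M where
  toFun z := if (Multiplicative.toAdd z : ZMod 2) = 0 then 1 else u
  map_one' := by simp
  map_mul' x y := by
    have hcase : ∀ w : ZMod 2, w = 0 ∨ w = 1 := by decide
    have hxy : Multiplicative.toAdd (x * y)
        = Multiplicative.toAdd x + Multiplicative.toAdd y := rfl
    rcases hcase (Multiplicative.toAdd x) with hx | hx <;>
      rcases hcase (Multiplicative.toAdd y) with hy | hy <;>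
      simp only [hxy, hx, hy] <;> norm_num
    · exact hu.symm

lemma invo_apply_one {M : Type*} [Monoid M] (u : M) (hu : u * u = 1) :
    invo u hu (Multiplicative.ofAdd 1) = u := by
  show (if ((1 : ZMod 2) = 0) then 1 else u) = u
  rw [if_neg (by decide)]

lemma invo_sq {M : Type*} [Monoid M] (u : M) (hu : u * u = 1) (z) :
    invo u hu z * invo u hu z = 1 := by
  unfold invo
  simp only [MonoidHom.coe_mk, OneHom.coe_mk]
  by_cases h : (Multiplicative.toAdd z : ZMod 2) = 0
  · rw [if_pos h, one_mul]
  · rw [if_neg h]; exact hu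

variable (g : ℕ)

/-- the quotient map onto `G_E`. -/
def mkE : FreeGroup (Option (Fin (g-1))) →* GE g := PresentedGroup.mk (relsE g)

lemma mkE_rel {r : FreeGroup (Option (Fin (g-1)))} (h : r ∈ relsE g) : mkE g r = 1 :=
  (QuotientGroup.eq_one_iff r).mpr (Subgroup.subset_normalClosure h)

lemma mkE_of (x : Option (Fin (g-1))) : mkE g (FreeGroup.of x) = PresentedGroup.of x := rfl

lemma ge_comm (j k : Fin (g-1)) (h : (j : ℕ) + 1 < k ∨ (k : ℕ) + 1 < j) :
    GE.t j * GE.t k = GE.t k * GE.t j := by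
  have hm : FreeGroup.of (some k) * FreeGroup.of (some j) *
      (FreeGroup.of (some j) * FreeGroup.of (some k))⁻¹ ∈ relsE g :=
    Set.mem_union_left _ (Set.mem_union_left _ (Set.mem_union_left _
      (Set.mem_union_left _ ⟨j, k, h, rfl⟩)))
  have h1 := mkE_rel g hm
  rw [map_mul, map_mul, map_inv, map_mul, mul_inv_eq_one] at h1
  exact h1.symm

lemma ge_braid (j k : Fin (g-1)) (h : (j : ℕ) + 1 = k) :
    GE.t j * GE.t k * GE.t j = GE.t k * GE.t j * GE.t k := by
  have hm : FreeGroup.of (some j) * FreeGroup.of (some k) * FreeGroup.of (some j) *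
      (FreeGroup.of (some k) * FreeGroup.of (some j) * FreeGroup.of (some k))⁻¹ ∈ relsE g :=
    Set.mem_union_left _ (Set.mem_union_left _ (Set.mem_union_left _
      (Set.mem_union_right _ ⟨j, k, h, rfl⟩)))
  have h1 := mkE_rel g hm
  rw [map_mul, map_inv, map_mul, map_mul, map_mul, map_mul, mul_inv_eq_one] at h1
  exact h1

lemma ge_rho_sq : GE.ρ g * GE.ρ g = 1 := by
  have hm : (FreeGroup.of (none : Option (Fin (g-1)))) ^ 2 ∈ relsE g :=
    Set.mem_union_left _ (Set.mem_union_right _ rfl)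
  have h1 := mkE_rel g hm
  rw [map_pow, pow_two] at h1
  exact h1

lemma ge_rho_t (j : Fin (g-1)) : GE.ρ g * GE.t j * GE.ρ g = GE.t j := by
  have hm : FreeGroup.of (none : Option (Fin (g-1))) * FreeGroup.of (some j) *
      FreeGroup.of none * (FreeGroup.of (some j))⁻¹ ∈ relsE g :=
    Set.mem_union_right _ ⟨j, rfl⟩
  have h1 := mkE_rel g hm
  rw [map_mul, map_inv, map_mul, map_mul, mul_inv_eq_one] at h1
  exact h1

/-- the product `t_1 t_2 ⋯ t_{g-1}` in `G_E`. -/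
def CE : GE g := (List.ofFn (fun i : Fin (g-1) => GE.t i)).prod

lemma ge_main : CE g ^ g * (if Odd g then (GE.ρ g)⁻¹ else 1) = 1 := by
  have hm : (List.ofFn (fun i : Fin (g-1) =>
        FreeGroup.of (some i : Option (Fin (g-1))))).prod ^ g *
      (if Odd g then (FreeGroup.of (none : Option (Fin (g-1))))⁻¹ else 1) ∈ relsE g :=
    Set.mem_union_left _ (Set.mem_union_left _ (Set.mem_union_right _ rfl))
  have h1 := mkE_rel g hm
  rw [map_mul, map_pow, map_list_prod, List.map_ofFn] at h1
  by_cases ho : Odd g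
  · simp only [ho, if_true, map_inv] at h1 ⊢
    exact h1
  · simp only [ho, if_false, map_one] at h1 ⊢
    exact h1

/-- the generators of `G_E` as an `ℕ`-indexed family. -/
def aE : ℕ → GE g := fun n => if h : n - 1 < g - 1 then GE.t ⟨n - 1, h⟩ else 1

lemma aE_eq (t : ℕ) (ht : t < g - 1) : aE g (1 + t) = GE.t ⟨t, ht⟩ := by
  unfold aE
  simp only [show 1 + t - 1 = t from by omega]
  rw [dif_pos ht]

lemma HcE : ∀ i j, 1 ≤ i → i + 2 ≤ j → j ≤ g - 1 → Commute (aE g i) (aE g j) := by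
  intro i j h1 h2 h3
  have hi : i - 1 < g - 1 := by omega
  have hj : j - 1 < g - 1 := by omega
  unfold aE
  rw [dif_pos hi, dif_pos hj]
  exact ge_comm g ⟨i - 1, hi⟩ ⟨j - 1, hj⟩ (Or.inl (show i - 1 + 1 < j - 1 by omega))

lemma HbE : ∀ i, 1 ≤ i → i + 1 ≤ g - 1 →
    aE g i * aE g (i + 1) * aE g i = aE g (i + 1) * aE g i * aE g (i + 1) := by
  intro i h1 h2
  have hi : i - 1 < g - 1 := by omega
  have hi' : i + 1 - 1 < g - 1 := by omega
  unfold aE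
  rw [dif_pos hi, dif_pos hi']
  exact ge_braid g ⟨i - 1, hi⟩ ⟨i + 1 - 1, hi'⟩ (show i - 1 + 1 = i + 1 - 1 by omega)

lemma asc_aE : asc (aE g) 1 (g - 1) = CE g :=
  asc_eq_ofFn _ _ (fun t ht => aE_eq g t ht)

lemma ge_power_eq (hg : 3 ≤ g) : (desc (aE g) 1 (g - 1)) ^ g = CE g ^ g := by
  have h := braid_eq (aE g) (g - 1) (HcE g) (HbE g)
  rw [show g - 1 + 1 = g by omega, asc_aE] at h
  exact h.symm

end Stmt17Aux

namespace Stmt17Aux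

open BraidAux

variable (g : ℕ)

/-- the function defining the involution `φ` on generators. -/
def fphi : Option (Fin (g-1)) → GE g := fun x => Option.rec (GE.ρ g) (fun i => (GE.t i)⁻¹) x

lemma desc_aE_inv : (List.ofFn (fun i : Fin (g-1) => (GE.t i)⁻¹)).prod
    = (desc (aE g) 1 (g-1))⁻¹ :=
  ofFn_inv_prod _ _ (fun t ht => aE_eq g t ht)

lemma hphi (hg : 3 ≤ g) : ∀ r ∈ relsE g, FreeGroup.lift (fphi g) r = 1 := by
  intro r hr
  have hrq : GE.ρ g * GE.ρ g = 1 := ge_rho_sq g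
  have hrinv : (GE.ρ g)⁻¹ = GE.ρ g := inv_eq_of_mul_eq_one_right hrq
  rcases hr with ((((h | h) | h) | h) | h)
  · obtain ⟨j, k, hjk, rfl⟩ := h
    have hc := ge_comm g j k hjk
    simp only [map_mul, map_inv, FreeGroup.lift_apply_of]
    show (GE.t k)⁻¹ * (GE.t j)⁻¹ * ((GE.t j)⁻¹ * (GE.t k)⁻¹)⁻¹ = 1
    rw [mul_inv_eq_one]
    simpa [mul_inv_rev] using congrArg Inv.inv hc
  · obtain ⟨j, k, hjk, rfl⟩ := h
    have hb := ge_braid g j k hjk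
    simp only [map_mul, map_inv, FreeGroup.lift_apply_of]
    show (GE.t j)⁻¹ * (GE.t k)⁻¹ * (GE.t j)⁻¹ *
      ((GE.t k)⁻¹ * (GE.t j)⁻¹ * (GE.t k)⁻¹)⁻¹ = 1
    rw [mul_inv_eq_one]
    calc (GE.t j)⁻¹ * (GE.t k)⁻¹ * (GE.t j)⁻¹
        = (GE.t j * GE.t k * GE.t j)⁻¹ := by rw [mul_inv_rev, mul_inv_rev, mul_assoc]
      _ = (GE.t k * GE.t j * GE.t k)⁻¹ := by rw [hb]
      _ = (GE.t k)⁻¹ * (GE.t j)⁻¹ * (GE.t k)⁻¹ := by rw [mul_inv_rev, mul_inv_rev, mul_assoc]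
  · rw [Set.mem_singleton_iff] at h
    subst h
    rw [map_mul, map_pow, map_list_prod, List.map_ofFn]
    have hlist : (List.ofFn (FreeGroup.lift (fphi g) ∘ fun i : Fin (g-1) =>
        FreeGroup.of (some i : Option (Fin (g-1))))).prod = (desc (aE g) 1 (g-1))⁻¹ := by
      rw [← desc_aE_inv g]
      congr 1
    rw [hlist]
    have hmain := ge_main g
    have hpow := ge_power_eq g hg
    by_cases ho : Odd g
    · simp only [ho, if_true, map_inv, FreeGroup.lift_apply_of] at hmain ⊢
      have hce : CE g ^ g = GE.ρ g := by rwa [mul_inv_eq_one] at hmain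
      show (desc (aE g) 1 (g-1))⁻¹ ^ g * (fphi g none)⁻¹ = 1
      rw [inv_pow, hpow, hce]
      show (GE.ρ g)⁻¹ * (GE.ρ g)⁻¹ = 1
      rw [hrinv, hrq]
    · simp only [ho, if_false, map_one] at hmain ⊢
      rw [mul_one] at hmain
      rw [mul_one, inv_pow, hpow, hmain, inv_one]
  · rw [Set.mem_singleton_iff] at h
    subst h
    rw [map_pow]
    show (fphi g none) ^ 2 = 1
    rw [pow_two]
    exact hrq
  · obtain ⟨j, rfl⟩ := h
    simp only [map_mul, map_inv, FreeGroup.lift_apply_of]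
    show GE.ρ g * (GE.t j)⁻¹ * GE.ρ g * ((GE.t j)⁻¹)⁻¹ = 1
    rw [mul_inv_eq_one]
    have h1 := ge_rho_t g j
    calc GE.ρ g * (GE.t j)⁻¹ * GE.ρ g
        = (GE.ρ g)⁻¹ * (GE.t j)⁻¹ * (GE.ρ g)⁻¹ := by rw [hrinv]
      _ = (GE.ρ g * GE.t j * GE.ρ g)⁻¹ := by rw [mul_inv_rev, mul_inv_rev, mul_assoc]
      _ = (GE.t j)⁻¹ := by rw [h1]

/-- the endomorphism `t ↦ t⁻¹`, `ρ ↦ ρ` of `G_E`. -/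
def phiHom (hg : 3 ≤ g) : GE g →* GE g := PresentedGroup.toGroup (hphi g hg)

lemma phiHom_t (hg : 3 ≤ g) (i : Fin (g-1)) : phiHom g hg (GE.t i) = (GE.t i)⁻¹ :=
  PresentedGroup.toGroup.of _

lemma phiHom_rho (hg : 3 ≤ g) : phiHom g hg (GE.ρ g) = GE.ρ g :=
  PresentedGroup.toGroup.of _

lemma phiHom_invol (hg : 3 ≤ g) : ∀ x, phiHom g hg (phiHom g hg x) = x := by
  have h : (phiHom g hg).comp (phiHom g hg) = MonoidHom.id (GE g) := by
    apply PresentedGroup.ext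
    intro x
    match x with
    | some i =>
        show phiHom g hg (phiHom g hg (GE.t i)) = GE.t i
        rw [phiHom_t, map_inv, phiHom_t, inv_inv]
    | none =>
        show phiHom g hg (phiHom g hg (GE.ρ g)) = GE.ρ g
        rw [phiHom_rho, phiHom_rho]
  intro x
  exact DFunLike.congr_fun h x

/-- the involutive automorphism `φ` of `G_E`. -/
def phiE (hg : 3 ≤ g) : MulAut (GE g) :=
  { toFun := phiHom g hg
    invFun := phiHom g hg
    left_inv := phiHom_invol g hg
    right_inv := phiHom_invol g hg
    map_mul' := map_mul _ }

lemma phiE_apply (hg : 3 ≤ g) (x : GE g) : phiE g hg x = phiHom g hg x := rfl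

lemma phiE_sq (hg : 3 ≤ g) : phiE g hg * phiE g hg = 1 := by
  apply MulEquiv.ext
  intro x
  show phiE g hg (phiE g hg x) = x
  rw [phiE_apply, phiE_apply]
  exact phiHom_invol g hg x

end Stmt17Aux

namespace Stmt17Aux

open BraidAux

variable (g : ℕ)

/-- the quotient map onto `G_C`. -/
def mkC : FreeGroup (Fin (g-1) ⊕ Bool) →* GC g := PresentedGroup.mk (relsC g)

lemma mkC_rel {r : FreeGroup (Fin (g-1) ⊕ Bool)} (h : r ∈ relsC g) : mkC g r = 1 :=
  (QuotientGroup.eq_one_iff r).mpr (Subgroup.subset_normalClosure h)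

lemma gc_comm (j k : Fin (g-1)) (h : (j : ℕ) + 1 < k ∨ (k : ℕ) + 1 < j) :
    GC.t j * GC.t k = GC.t k * GC.t j := by
  have hm : FreeGroup.of (Sum.inl k : Fin (g-1) ⊕ Bool) * FreeGroup.of (.inl j) *
      (FreeGroup.of (.inl j) * FreeGroup.of (.inl k))⁻¹ ∈ relsC g :=
    Set.mem_union_left _ (Set.mem_union_left _ (Set.mem_union_left _ (Set.mem_union_left _
      (Set.mem_union_left _ (Set.mem_union_left _ (Set.mem_union_left _ ⟨j, k, h, rfl⟩))))))
  have h1 := mkC_rel g hm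
  rw [map_mul, map_mul, map_inv, map_mul, mul_inv_eq_one] at h1
  exact h1.symm

lemma gc_braid (j k : Fin (g-1)) (h : (j : ℕ) + 1 = k) :
    GC.t j * GC.t k * GC.t j = GC.t k * GC.t j * GC.t k := by
  have hm : FreeGroup.of (Sum.inl j : Fin (g-1) ⊕ Bool) * FreeGroup.of (.inl k) *
      FreeGroup.of (.inl j) *
      (FreeGroup.of (.inl k) * FreeGroup.of (.inl j) * FreeGroup.of (.inl k))⁻¹ ∈ relsC g :=
    Set.mem_union_left _ (Set.mem_union_left _ (Set.mem_union_left _ (Set.mem_union_left _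
      (Set.mem_union_left _ (Set.mem_union_left _ (Set.mem_union_right _ ⟨j, k, h, rfl⟩))))))
  have h1 := mkC_rel g hm
  rw [map_mul, map_inv, map_mul, map_mul, map_mul, map_mul, mul_inv_eq_one] at h1
  exact h1

/-- the product `t_1 t_2 ⋯ t_{g-1}` in `G_C`. -/
def CC : GC g := (List.ofFn (fun i : Fin (g-1) => GC.t i)).prod

lemma gc_main : CC g ^ g * (if Odd g then (GC.ρ g)⁻¹ else 1) = 1 := by
  have hm : (List.ofFn (fun i : Fin (g-1) =>
        FreeGroup.of (Sum.inl i : Fin (g-1) ⊕ Bool))).prod ^ g *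
      (if Odd g then (FreeGroup.of (Sum.inr true : Fin (g-1) ⊕ Bool))⁻¹ else 1) ∈ relsC g :=
    Set.mem_union_left _ (Set.mem_union_left _ (Set.mem_union_left _ (Set.mem_union_left _
      (Set.mem_union_left _ (Set.mem_union_right _ rfl)))))
  have h1 := mkC_rel g hm
  rw [map_mul, map_pow, map_list_prod, List.map_ofFn] at h1
  by_cases ho : Odd g
  · simp only [ho, if_true, map_inv] at h1 ⊢
    exact h1
  · simp only [ho, if_false, map_one] at h1 ⊢
    exact h1

lemma gc_s_sq : GC.s g * GC.s g = 1 := by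
  have hm : (FreeGroup.of (Sum.inr false : Fin (g-1) ⊕ Bool)) ^ 2 ∈ relsC g :=
    Set.mem_union_left _ (Set.mem_union_left _ (Set.mem_union_left _ (Set.mem_union_left _
      (Set.mem_union_right _ rfl))))
  have h1 := mkC_rel g hm
  rw [map_pow, pow_two] at h1
  exact h1

lemma gc_sts (j : Fin (g-1)) : GC.s g * GC.t j * GC.s g * GC.t j = 1 := by
  have hm : FreeGroup.of (Sum.inr false : Fin (g-1) ⊕ Bool) * FreeGroup.of (.inl j) *
      FreeGroup.of (.inr false) * FreeGroup.of (.inl j) ∈ relsC g :=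
    Set.mem_union_left _ (Set.mem_union_left _ (Set.mem_union_left _
      (Set.mem_union_right _ ⟨j, rfl⟩)))
  have h1 := mkC_rel g hm
  rw [map_mul, map_mul, map_mul] at h1
  exact h1

lemma gc_rho_sq : GC.ρ g * GC.ρ g = 1 := by
  have hm : (FreeGroup.of (Sum.inr true : Fin (g-1) ⊕ Bool)) ^ 2 ∈ relsC g :=
    Set.mem_union_left _ (Set.mem_union_left _ (Set.mem_union_right _ rfl))
  have h1 := mkC_rel g hm
  rw [map_pow, pow_two] at h1
  exact h1

lemma gc_rho_t (j : Fin (g-1)) : GC.ρ g * GC.t j * GC.ρ g = GC.t j := by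
  have hm : FreeGroup.of (Sum.inr true : Fin (g-1) ⊕ Bool) * FreeGroup.of (.inl j) *
      FreeGroup.of (.inr true) * (FreeGroup.of (.inl j))⁻¹ ∈ relsC g :=
    Set.mem_union_left _ (Set.mem_union_right _ ⟨j, rfl⟩)
  have h1 := mkC_rel g hm
  rw [map_mul, map_inv, map_mul, map_mul, mul_inv_eq_one] at h1
  exact h1

lemma gc_rho_s : GC.ρ g * GC.s g * GC.ρ g = GC.s g := by
  have hm : FreeGroup.of (Sum.inr true : Fin (g-1) ⊕ Bool) * FreeGroup.of (.inr false) *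
      FreeGroup.of (.inr true) * (FreeGroup.of (.inr false))⁻¹ ∈ relsC g :=
    Set.mem_union_right _ rfl
  have h1 := mkC_rel g hm
  rw [map_mul, map_inv, map_mul, map_mul, mul_inv_eq_one] at h1
  exact h1

lemma gc_s_inv : (GC.s g)⁻¹ = GC.s g := inv_eq_of_mul_eq_one_right (gc_s_sq g)

lemma gc_rho_inv : (GC.ρ g)⁻¹ = GC.ρ g := inv_eq_of_mul_eq_one_right (gc_rho_sq g)

lemma gc_sts' (j : Fin (g-1)) : GC.s g * GC.t j * (GC.s g)⁻¹ = (GC.t j)⁻¹ := by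
  rw [gc_s_inv]
  have h := gc_sts g j
  exact eq_inv_of_mul_eq_one_left h

lemma gc_s_rho_comm : GC.s g * GC.ρ g = GC.ρ g * GC.s g := by
  have h := gc_rho_s g
  calc GC.s g * GC.ρ g = GC.ρ g * (GC.ρ g * GC.s g * GC.ρ g) := by
        rw [← mul_assoc, ← mul_assoc, gc_rho_sq, one_mul]
    _ = GC.ρ g * GC.s g := by rw [h]

lemma gc_srs : GC.s g * GC.ρ g * (GC.s g)⁻¹ = GC.ρ g := by
  rw [gc_s_rho_comm, mul_assoc, mul_inv_cancel, mul_one]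

end Stmt17Aux

namespace Stmt17Aux

open BraidAux

variable (g : ℕ)

/-- generator map for the natural homomorphism `G_E → G_C`. -/
def falpha : Option (Fin (g-1)) → GC g := fun x => Option.rec (GC.ρ g) (fun i => GC.t i) x

lemma halpha : ∀ r ∈ relsE g, FreeGroup.lift (falpha g) r = 1 := by
  intro r hr
  rcases hr with ((((h | h) | h) | h) | h)
  · obtain ⟨j, k, hjk, rfl⟩ := h
    simp only [map_mul, map_inv, FreeGroup.lift_apply_of]
    show GC.t k * GC.t j * (GC.t j * GC.t k)⁻¹ = 1
    rw [mul_inv_eq_one]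
    exact (gc_comm g j k hjk).symm
  · obtain ⟨j, k, hjk, rfl⟩ := h
    simp only [map_mul, map_inv, FreeGroup.lift_apply_of]
    show GC.t j * GC.t k * GC.t j * (GC.t k * GC.t j * GC.t k)⁻¹ = 1
    rw [mul_inv_eq_one]
    exact gc_braid g j k hjk
  · rw [Set.mem_singleton_iff] at h
    subst h
    rw [map_mul, map_pow, map_list_prod, List.map_ofFn]
    have hlist : (List.ofFn (FreeGroup.lift (falpha g) ∘ fun i : Fin (g-1) =>
        FreeGroup.of (some i : Option (Fin (g-1))))).prod = CC g := by
      unfold CC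
      congr 1
    rw [hlist]
    have hmain := gc_main g
    by_cases ho : Odd g
    · simp only [ho, if_true, map_inv, FreeGroup.lift_apply_of] at hmain ⊢
      exact hmain
    · simp only [ho, if_false, map_one] at hmain ⊢
      exact hmain
  · rw [Set.mem_singleton_iff] at h
    subst h
    rw [map_pow]
    show (GC.ρ g) ^ 2 = 1
    rw [pow_two]
    exact gc_rho_sq g
  · obtain ⟨j, rfl⟩ := h
    simp only [map_mul, map_inv, FreeGroup.lift_apply_of]
    show GC.ρ g * GC.t j * GC.ρ g * (GC.t j)⁻¹ = 1
    rw [mul_inv_eq_one]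
    exact gc_rho_t g j

/-- the natural homomorphism `G_E → G_C`. -/
def alphaHom : GE g →* GC g := PresentedGroup.toGroup (halpha g)

lemma alphaHom_t (i : Fin (g-1)) : alphaHom g (GE.t i) = GC.t i :=
  PresentedGroup.toGroup.of _

lemma alphaHom_rho : alphaHom g (GE.ρ g) = GC.ρ g :=
  PresentedGroup.toGroup.of _

/-- `β : ℤ/2 → G_C`, `1 ↦ s`. -/
def betaC : Multiplicative (ZMod 2) →* GC g := invo (GC.s g) (gc_s_sq g)

lemma betaC_one : betaC g (Multiplicative.ofAdd 1) = GC.s g := invo_apply_one _ _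

section WithPsi

variable (hg : 3 ≤ g)
variable (ψ : Multiplicative (ZMod 2) →* MulAut (GE g))
variable (hψ : ψ (Multiplicative.ofAdd 1) = phiE g hg)

lemma zmod2_cases (z : Multiplicative (ZMod 2)) : z = 1 ∨ z = Multiplicative.ofAdd 1 := by
  have hcase : ∀ w : ZMod 2, w = 0 ∨ w = 1 := by decide
  rcases hcase (Multiplicative.toAdd z) with h | h
  · left
    have := congrArg Multiplicative.ofAdd h
    simpa using this
  · right
    have := congrArg Multiplicative.ofAdd h
    simpa using this

include hψ in
lemma compat : ∀ z, (alphaHom g).comp (ψ z).toMonoidHom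
    = (MulAut.conj (betaC g z)).toMonoidHom.comp (alphaHom g) := by
  intro z
  rcases zmod2_cases z with rfl | rfl
  · rw [map_one, map_one]
    ext x
    simp
  · rw [hψ, betaC_one]
    apply PresentedGroup.ext
    intro x
    match x with
    | some i =>
        show alphaHom g (phiE g hg (GE.t i)) = MulAut.conj (GC.s g) (alphaHom g (GE.t i))
        rw [phiE_apply, phiHom_t, map_inv, MulAut.conj_apply, alphaHom_t]
        exact (gc_sts' g i).symm
    | none =>
        show alphaHom g (phiE g hg (GE.ρ g)) = MulAut.conj (GC.s g) (alphaHom g (GE.ρ g))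
        rw [phiE_apply, phiHom_rho, MulAut.conj_apply, alphaHom_rho]
        exact (gc_srs g).symm

/-- the forward homomorphism from the semidirect product to `G_C`. -/
def fwd : (GE g ⋊[ψ] Multiplicative (ZMod 2)) →* GC g :=
  SemidirectProduct.lift (alphaHom g) (betaC g) (compat g hg ψ hψ)

lemma sig_mul : (Multiplicative.ofAdd (1 : ZMod 2)) * (Multiplicative.ofAdd 1) = 1 := by decide

lemma sig_inv : (Multiplicative.ofAdd (1 : ZMod 2))⁻¹ = Multiplicative.ofAdd 1 := by decide

include hψ in
lemma sdp_conj (x : GE g) :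
    SemidirectProduct.inr (φ := ψ) (Multiplicative.ofAdd 1) * SemidirectProduct.inl x *
      SemidirectProduct.inr (Multiplicative.ofAdd 1) = SemidirectProduct.inl (phiE g hg x) := by
  have h := SemidirectProduct.inl_aut (φ := ψ) (Multiplicative.ofAdd 1) x
  rw [hψ, sig_inv] at h
  exact h.symm

/-- generator map for the homomorphism `G_C →` semidirect product. -/
def fback : Fin (g-1) ⊕ Bool → GE g ⋊[ψ] Multiplicative (ZMod 2) := fun x =>
  Sum.rec (fun i => SemidirectProduct.inl (GE.t i))
    (fun b => Bool.rec (SemidirectProduct.inr (Multiplicative.ofAdd 1))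
      (SemidirectProduct.inl (GE.ρ g)) b) x

include hψ in
lemma hback : ∀ r ∈ relsC g, FreeGroup.lift (fback g ψ) r = 1 := by
  intro r hr
  rcases hr with (((((((h | h) | h) | h) | h) | h) | h) | h)
  · obtain ⟨j, k, hjk, rfl⟩ := h
    simp only [map_mul, map_inv, FreeGroup.lift_apply_of]
    show SemidirectProduct.inl (GE.t k) * SemidirectProduct.inl (GE.t j) *
      (SemidirectProduct.inl (GE.t j) * SemidirectProduct.inl (GE.t k))⁻¹ = 1
    rw [mul_inv_eq_one, ← map_mul, ← map_mul]
    exact congrArg _ (ge_comm g j k hjk).symm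
  · obtain ⟨j, k, hjk, rfl⟩ := h
    simp only [map_mul, map_inv, FreeGroup.lift_apply_of]
    show SemidirectProduct.inl (GE.t j) * SemidirectProduct.inl (GE.t k) *
      SemidirectProduct.inl (GE.t j) *
      (SemidirectProduct.inl (GE.t k) * SemidirectProduct.inl (GE.t j) *
        SemidirectProduct.inl (GE.t k))⁻¹ = 1
    rw [mul_inv_eq_one, ← map_mul, ← map_mul, ← map_mul, ← map_mul]
    exact congrArg _ (ge_braid g j k hjk)
  · rw [Set.mem_singleton_iff] at h
    subst h
    rw [map_mul, map_pow, map_list_prod, List.map_ofFn]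
    have hlist : (List.ofFn (FreeGroup.lift (fback g ψ) ∘ fun i : Fin (g-1) =>
        FreeGroup.of (Sum.inl i : Fin (g-1) ⊕ Bool))).prod
        = SemidirectProduct.inl (φ := ψ) (CE g) := by
      unfold CE
      rw [map_list_prod, List.map_ofFn]
      have hfun : (⇑(FreeGroup.lift (fback g ψ)) ∘ fun i : Fin (g-1) =>
          FreeGroup.of (Sum.inl i : Fin (g-1) ⊕ Bool))
          = (⇑(SemidirectProduct.inl (φ := ψ)) ∘ fun i : Fin (g-1) => GE.t i) := by
        funext i
        simp only [Function.comp_apply, FreeGroup.lift_apply_of]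
        rfl
      rw [hfun]
    rw [hlist]
    have hmain := ge_main g
    by_cases ho : Odd g
    · simp only [ho, if_true, map_inv, FreeGroup.lift_apply_of] at hmain ⊢
      show SemidirectProduct.inl (φ := ψ) (CE g) ^ g *
        (SemidirectProduct.inl (φ := ψ) (GE.ρ g))⁻¹ = 1
      rw [← map_pow, ← map_inv, ← map_mul, hmain, map_one]
    · simp only [ho, if_false, map_one] at hmain ⊢
      rw [mul_one] at hmain
      rw [mul_one, ← map_pow, hmain, map_one]
  · rw [Set.mem_singleton_iff] at h
    subst h
    rw [map_pow, FreeGroup.lift_apply_of]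
    show (SemidirectProduct.inr (φ := ψ) (Multiplicative.ofAdd 1)) ^ 2 = 1
    rw [pow_two, ← map_mul, sig_mul, map_one]
  · obtain ⟨j, rfl⟩ := h
    simp only [map_mul, FreeGroup.lift_apply_of]
    show SemidirectProduct.inr (Multiplicative.ofAdd 1) * SemidirectProduct.inl (GE.t j) *
      SemidirectProduct.inr (Multiplicative.ofAdd 1) * SemidirectProduct.inl (GE.t j) = 1
    rw [sdp_conj g hg ψ hψ (GE.t j), ← map_mul, phiE_apply, phiHom_t, inv_mul_cancel, map_one]
  · rw [Set.mem_singleton_iff] at h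
    subst h
    rw [map_pow, FreeGroup.lift_apply_of]
    show (SemidirectProduct.inl (φ := ψ) (GE.ρ g)) ^ 2 = 1
    rw [pow_two, ← map_mul, ge_rho_sq, map_one]
  · obtain ⟨j, rfl⟩ := h
    simp only [map_mul, map_inv, FreeGroup.lift_apply_of]
    show SemidirectProduct.inl (GE.ρ g) * SemidirectProduct.inl (GE.t j) *
      SemidirectProduct.inl (GE.ρ g) * (SemidirectProduct.inl (φ := ψ) (GE.t j))⁻¹ = 1
    rw [mul_inv_eq_one, ← map_mul, ← map_mul]
    exact congrArg _ (ge_rho_t g j)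
  · rw [Set.mem_singleton_iff] at h
    subst h
    simp only [map_mul, map_inv, FreeGroup.lift_apply_of]
    show SemidirectProduct.inl (GE.ρ g) * SemidirectProduct.inr (Multiplicative.ofAdd 1) *
      SemidirectProduct.inl (GE.ρ g) *
      (SemidirectProduct.inr (φ := ψ) (Multiplicative.ofAdd 1))⁻¹ = 1
    have hc := sdp_conj g hg ψ hψ (GE.ρ g)
    rw [← map_inv, sig_inv]
    have h2 : SemidirectProduct.inl (GE.ρ g) *
        (SemidirectProduct.inr (φ := ψ) (Multiplicative.ofAdd 1) *
          SemidirectProduct.inl (GE.ρ g) * SemidirectProduct.inr (Multiplicative.ofAdd 1)) = 1 := by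
      rw [hc, phiE_apply, phiHom_rho, ← map_mul, ge_rho_sq, map_one]
    simp only [mul_assoc] at h2 ⊢
    exact h2
end WithPsi

end Stmt17Aux

namespace Stmt17Aux

open BraidAux

variable (g : ℕ) (hg : 3 ≤ g)
variable (ψ : Multiplicative (ZMod 2) →* MulAut (GE g))
variable (hψ : ψ (Multiplicative.ofAdd 1) = phiE g hg)

/-- the backwards homomorphism `G_C →` semidirect product. -/
def back : GC g →* (GE g ⋊[ψ] Multiplicative (ZMod 2)) :=
  PresentedGroup.toGroup (hback g hg ψ hψ)

lemma back_t (i : Fin (g-1)) : back g hg ψ hψ (GC.t i) = SemidirectProduct.inl (GE.t i) :=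
  PresentedGroup.toGroup.of _

lemma back_s : back g hg ψ hψ (GC.s g) = SemidirectProduct.inr (Multiplicative.ofAdd 1) :=
  PresentedGroup.toGroup.of _

lemma back_rho : back g hg ψ hψ (GC.ρ g) = SemidirectProduct.inl (GE.ρ g) :=
  PresentedGroup.toGroup.of _

lemma fwd_inl (x : GE g) : fwd g hg ψ hψ (SemidirectProduct.inl x) = alphaHom g x :=
  SemidirectProduct.lift_inl _ _ _ _

lemma fwd_inr (z : Multiplicative (ZMod 2)) :
    fwd g hg ψ hψ (SemidirectProduct.inr z) = betaC g z :=
  SemidirectProduct.lift_inr _ _ _ _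

include hψ in
lemma back_fwd : (back g hg ψ hψ).comp (fwd g hg ψ hψ)
    = MonoidHom.id (GE g ⋊[ψ] Multiplicative (ZMod 2)) := by
  apply SemidirectProduct.hom_ext
  · apply PresentedGroup.ext
    intro x
    match x with
    | some i =>
        show back g hg ψ hψ (fwd g hg ψ hψ (SemidirectProduct.inl (GE.t i)))
          = SemidirectProduct.inl (GE.t i)
        rw [fwd_inl, alphaHom_t, back_t]
    | none =>
        show back g hg ψ hψ (fwd g hg ψ hψ (SemidirectProduct.inl (GE.ρ g)))
          = SemidirectProduct.inl (GE.ρ g)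
        rw [fwd_inl, alphaHom_rho, back_rho]
  · apply MonoidHom.ext
    intro z
    simp only [MonoidHom.comp_apply, MonoidHom.id_apply]
    rcases zmod2_cases z with rfl | rfl
    · rw [map_one, map_one, map_one]
    · rw [fwd_inr, betaC_one, back_s]

include hψ in
lemma fwd_back : (fwd g hg ψ hψ).comp (back g hg ψ hψ) = MonoidHom.id (GC g) := by
  apply PresentedGroup.ext
  intro x
  match x with
  | Sum.inl i =>
      show fwd g hg ψ hψ (back g hg ψ hψ (GC.t i)) = GC.t i
      rw [back_t, fwd_inl, alphaHom_t]
  | Sum.inr false =>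
      show fwd g hg ψ hψ (back g hg ψ hψ (GC.s g)) = GC.s g
      rw [back_s, fwd_inr, betaC_one]
  | Sum.inr true =>
      show fwd g hg ψ hψ (back g hg ψ hψ (GC.ρ g)) = GC.ρ g
      rw [back_rho, fwd_inl, alphaHom_rho]

/-- the isomorphism between the semidirect product and `G_C`. -/
def sdpEquiv : (GE g ⋊[ψ] Multiplicative (ZMod 2)) ≃* GC g :=
  { toFun := fwd g hg ψ hψ
    invFun := back g hg ψ hψ
    left_inv := fun x => DFunLike.congr_fun (back_fwd g hg ψ hψ) x
    right_inv := fun x => DFunLike.congr_fun (fwd_back g hg ψ hψ) x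
    map_mul' := map_mul _ }

lemma sdpEquiv_apply (x) : sdpEquiv g hg ψ hψ x = fwd g hg ψ hψ x := rfl

lemma sdpEquiv_inl_t (j : Fin (g-1)) :
    sdpEquiv g hg ψ hψ (SemidirectProduct.inl (GE.t j)) = GC.t j := by
  rw [sdpEquiv_apply, fwd_inl, alphaHom_t]

lemma sdpEquiv_inl_rho :
    sdpEquiv g hg ψ hψ (SemidirectProduct.inl (GE.ρ g)) = GC.ρ g := by
  rw [sdpEquiv_apply, fwd_inl, alphaHom_rho]

lemma sdpEquiv_inr :
    sdpEquiv g hg ψ hψ (SemidirectProduct.inr (Multiplicative.ofAdd 1)) = GC.s g := by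
  rw [sdpEquiv_apply, fwd_inr, betaC_one]

lemma inl_range_index :
    (SemidirectProduct.inl : GE g →* GE g ⋊[ψ] Multiplicative (ZMod 2)).range.index = 2 := by
  rw [SemidirectProduct.range_inl_eq_ker_rightHom, Subgroup.index_ker,
    MonoidHom.range_eq_top_of_surjective _ SemidirectProduct.rightHom_surjective,
    Subgroup.card_top]
  rw [Nat.card_congr (Multiplicative.toAdd (α := ZMod 2))]
  exact Nat.card_zmod 2

end Stmt17Aux

open Stmt17Aux in
/-- There is an involutive automorphism `φ` of `G_E(g)` with `φ(t_j) = t_j⁻¹`,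
`φ(ρ) = ρ`; the semidirect product `G_E(g) ⋊ ℤ/2` in which the nontrivial element of
`ℤ/2` acts by `φ` is isomorphic to `G_C(g)` via `t_j ↦ t_j`, `ρ ↦ ρ`, generator of
`ℤ/2 ↦ s`; and the natural homomorphism `G_E(g) → G_C(g)` is injective with image of
index `2`. -/
theorem stmt17 (g : ℕ) (hg : 3 ≤ g) :
    ∃ φ : MulAut (GE g),
      (∀ j : Fin (g-1), φ (GE.t j) = (GE.t j)⁻¹) ∧
      φ (GE.ρ g) = GE.ρ g ∧
      (∀ x, φ (φ x) = x) ∧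
      (∀ ψ : Multiplicative (ZMod 2) →* MulAut (GE g), ψ (Multiplicative.ofAdd 1) = φ →
        ∃ e : (GE g) ⋊[ψ] Multiplicative (ZMod 2) ≃* GC g,
          (∀ j : Fin (g-1), e (SemidirectProduct.inl (GE.t j)) = GC.t j) ∧
          e (SemidirectProduct.inl (GE.ρ g)) = GC.ρ g ∧
          e (SemidirectProduct.inr (Multiplicative.ofAdd 1)) = GC.s g) ∧
      ∃ f : GE g →* GC g,
        (∀ j : Fin (g-1), f (GE.t j) = GC.t j) ∧
        f (GE.ρ g) = GC.ρ g ∧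
        Function.Injective f ∧
        f.range.index = 2 := by
  refine ⟨phiE g hg, fun j => phiHom_t g hg j, phiHom_rho g hg, phiHom_invol g hg, ?_, ?_⟩
  · intro ψ hψ
    exact ⟨sdpEquiv g hg ψ hψ, fun j => sdpEquiv_inl_t g hg ψ hψ j,
      sdpEquiv_inl_rho g hg ψ hψ, sdpEquiv_inr g hg ψ hψ⟩
  · have hphi2 : phiE g hg * phiE g hg = 1 := phiE_sq g hg
    set ψ0 : Multiplicative (ZMod 2) →* MulAut (GE g) := invo (phiE g hg) hphi2 with hψ0def
    have hψ0 : ψ0 (Multiplicative.ofAdd 1) = phiE g hg := invo_apply_one _ _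
    set e := sdpEquiv g hg ψ0 hψ0 with he
    refine ⟨e.toMonoidHom.comp SemidirectProduct.inl, ?_, ?_, ?_, ?_⟩
    · intro j
      exact sdpEquiv_inl_t g hg ψ0 hψ0 j
    · exact sdpEquiv_inl_rho g hg ψ0 hψ0
    · intro x y hxy
      exact SemidirectProduct.inl_injective (e.injective hxy)
    · rw [MonoidHom.range_comp]
      have hker : (e.toMonoidHom).ker ≤
          (SemidirectProduct.inl : GE g →* GE g ⋊[ψ0] Multiplicative (ZMod 2)).range := by
        rw [(MonoidHom.ker_eq_bot_iff (e.toMonoidHom)).mpr e.injective]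
        exact bot_le
      rw [Subgroup.index_map_eq (SemidirectProduct.inl :
          GE g →* GE g ⋊[ψ0] Multiplicative (ZMod 2)).range (f := e.toMonoidHom)
        e.surjective hker]
      exact inl_range_index g ψ0
end
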